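/- arXiv:math/0502141 — 5 statements merged into one kernel-verified Lean document; each statement's English description precedes it below -/
import Mathlib

section
/- The sequence (log n)_{n ≥ 1} is not holonomic over ℝ: there do not exist real polynomials p_0, p_1, ..., p_d, not all zero, such that p_d(n)·log(n+d) + ... + p_1(n)·log(n+1) + p_0(n)·log n = 0 for every integer n ≥ 1. -/
open Polynomial Finset Filter Real

/-- Upper bound for polynomial values. -/
lemma poly_upper (A : Polynomial ℝ) (D : ℕ) (hD : A.natDegree ≤ D) :
    ∃ C : ℝ, 0 ≤ C ∧ ∀ x : ℝ, 1 ≤ x → |A.eval x| ≤ C * x ^ D := by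
  refine ⟨∑ j ∈ range (D+1), |A.coeff j|, Finset.sum_nonneg fun _ _ => abs_nonneg _, ?_⟩
  intro x hx
  have hx0 : (0:ℝ) ≤ x := le_trans zero_le_one hx
  have hev : A.eval x = ∑ j ∈ range (D+1), A.coeff j * x ^ j :=
    A.eval_eq_sum_range' (Nat.lt_succ_of_le hD) x
  rw [hev, Finset.sum_mul]
  refine (Finset.abs_sum_le_sum_abs _ _).trans (Finset.sum_le_sum ?_)
  intro j hj
  rw [abs_mul, abs_pow, abs_of_nonneg hx0]
  exact mul_le_mul_of_nonneg_left (pow_le_pow_right₀ hx (by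
    simpa using Nat.lt_succ_iff.mp (Finset.mem_range.mp hj))) (abs_nonneg _)

/-- Eventual lower bound for nonzero polynomial values. -/
lemma poly_lower (A : Polynomial ℝ) (hA : A ≠ 0) :
    ∀ᶠ x : ℝ in atTop, |A.leadingCoeff| / 2 * x ^ A.natDegree ≤ |A.eval x| := by
  have h := A.isEquivalent_atTop_lead
  have h2 := h.def (c := 1/2) (by norm_num)
  filter_upwards [h2, eventually_ge_atTop (0:ℝ)] with x hx hx0
  have hnorm : ‖A.eval x - A.leadingCoeff * x ^ A.natDegree‖ ≤ 1/2 * ‖A.leadingCoeff * x ^ A.natDegree‖ := hx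
  have habs : |A.leadingCoeff * x ^ A.natDegree| = |A.leadingCoeff| * x ^ A.natDegree := by
    rw [abs_mul, abs_pow, abs_of_nonneg hx0]
  simp only [Pi.sub_apply, Real.norm_eq_abs] at hnorm
  have h3 := abs_sub_abs_le_abs_sub (A.leadingCoeff * x ^ A.natDegree) (A.eval x)
  rw [abs_sub_comm] at h3
  nlinarith [abs_nonneg (A.eval x), pow_nonneg hx0 A.natDegree]

/-- A polynomial whose values on ℕ are eventually `≤ C * n ^ m` has all coefficients above `m` zero. -/
lemma poly_coeff_zero_of_growth (A : Polynomial ℝ) (m : ℕ) (C : ℝ)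
    (h : ∀ᶠ n : ℕ in atTop, |A.eval (n:ℝ)| ≤ C * (n:ℝ) ^ m) :
    ∀ r, m < r → A.coeff r = 0 := by
  intro r hr
  by_cases hA : A = 0
  · simp [hA]
  by_cases hdeg : A.natDegree ≤ m
  · exact A.coeff_eq_zero_of_natDegree_lt (lt_of_le_of_lt hdeg hr)
  push_neg at hdeg
  exfalso
  have hlc : |A.leadingCoeff| / 2 > 0 := by
    have := Polynomial.leadingCoeff_ne_zero.mpr hA
    positivity
  have hlow : ∀ᶠ n : ℕ in atTop,
      |A.leadingCoeff| / 2 * (n:ℝ) ^ A.natDegree ≤ |A.eval (n:ℝ)| :=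
    tendsto_natCast_atTop_atTop.eventually (poly_lower A hA)
  -- combine : c * n^deg ≤ C * n^m with deg ≥ m+1
  have key : ∀ᶠ n : ℕ in atTop,
      |A.leadingCoeff| / 2 * (n:ℝ) ≤ C := by
    filter_upwards [h, hlow, eventually_ge_atTop 1] with n hn hlown hn1
    have hn0 : (0:ℝ) < (n:ℝ) := by exact_mod_cast hn1
    have hle : |A.leadingCoeff| / 2 * (n:ℝ) ^ A.natDegree ≤ C * (n:ℝ) ^ m :=
      le_trans hlown hn
    have hpow : (n:ℝ) ^ (m+1) ≤ (n:ℝ) ^ A.natDegree :=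
      pow_le_pow_right₀ (by exact_mod_cast hn1) hdeg
    have h2 : |A.leadingCoeff| / 2 * (n:ℝ) ^ (m+1) ≤ C * (n:ℝ) ^ m :=
      le_trans (by nlinarith) hle
    rw [pow_succ] at h2
    have hpm : (0:ℝ) < (n:ℝ) ^ m := pow_pos hn0 m
    nlinarith
  obtain ⟨n, hn⟩ := ((tendsto_natCast_atTop_atTop.const_mul_atTop hlc).eventually_ge_atTop (C+1)).and key |>.exists
  linarith [hn.1, hn.2]

/-- Key growth lemma: `A(n) log n + B(n)` cannot be `O(n^m)` if `deg A > m`. -/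
lemma key_log_growth (A B : Polynomial ℝ) (m : ℕ) (hA : A ≠ 0) (hdeg : m < A.natDegree)
    (C : ℝ) (h : ∀ᶠ n : ℕ in atTop, |A.eval (n:ℝ) * Real.log n + B.eval (n:ℝ)| ≤ C * (n:ℝ) ^ m) :
    False := by
  have hlcA : (0:ℝ) < |A.leadingCoeff| / 2 := by
    have := Polynomial.leadingCoeff_ne_zero.mpr hA; positivity
  obtain ⟨CA, hCA0, hCA⟩ := poly_upper A A.natDegree le_rfl
  by_cases hb : B.natDegree ≤ A.natDegree
  · -- A-part dominates
    obtain ⟨CB, hCB0, hCB⟩ := poly_upper B A.natDegree hb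
    have hlow := tendsto_natCast_atTop_atTop.eventually (poly_lower A hA)
    have hlog : ∀ᶠ n : ℕ in atTop, (|C| + CB) / (|A.leadingCoeff| / 2) + 1 ≤ Real.log n :=
      (Real.tendsto_log_atTop.comp tendsto_natCast_atTop_atTop).eventually_ge_atTop _
    obtain ⟨n, hn, hlown, hlogn, hn1⟩ :=
      (h.and (hlow.and (hlog.and (eventually_ge_atTop 1)))).exists
    have hn1' : (1:ℝ) ≤ (n:ℝ) := by exact_mod_cast hn1
    have hpow : (0:ℝ) < (n:ℝ) ^ A.natDegree := pow_pos (by linarith) _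
    have hlog0 : 0 ≤ Real.log n := Real.log_nonneg hn1'
    have hBn := hCB (n:ℝ) hn1'
    have htri : |A.eval (n:ℝ)| * Real.log n ≤ |A.eval (n:ℝ) * Real.log n + B.eval (n:ℝ)| + |B.eval (n:ℝ)| := by
      have := abs_add_le (A.eval (n:ℝ) * Real.log n + B.eval (n:ℝ)) (-(B.eval (n:ℝ)))
      simp only [abs_neg, add_neg_cancel_right] at this
      rw [abs_mul, abs_of_nonneg hlog0] at this
      linarith
    have hmono : C * (n:ℝ) ^ m ≤ |C| * (n:ℝ) ^ A.natDegree := by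
      have h1 : C * (n:ℝ)^m ≤ |C| * (n:ℝ)^m :=
        mul_le_mul_of_nonneg_right (le_abs_self C) (pow_nonneg (by linarith) m)
      exact h1.trans (mul_le_mul_of_nonneg_left
        (pow_le_pow_right₀ hn1' (le_of_lt hdeg)) (abs_nonneg C))
    have hmain : (|A.leadingCoeff| / 2) * (n:ℝ) ^ A.natDegree * Real.log n
        ≤ (|C| + CB) * (n:ℝ) ^ A.natDegree := by
      have hAl : (|A.leadingCoeff| / 2) * (n:ℝ) ^ A.natDegree * Real.log n
          ≤ |A.eval (n:ℝ)| * Real.log n := mul_le_mul_of_nonneg_right hlown hlog0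
      nlinarith
    have hfin : (|A.leadingCoeff| / 2) * Real.log n ≤ |C| + CB := by
      have := (mul_le_mul_iff_of_pos_right hpow).mpr (le_refl (Real.log n))
      nlinarith
    have : Real.log n ≤ (|C| + CB) / (|A.leadingCoeff| / 2) := (le_div_iff₀ hlcA).mpr (by linarith)
    have h2 : (|C| + CB) / (|A.leadingCoeff| / 2) + 1 ≤ (|C| + CB) / (|A.leadingCoeff| / 2) := le_trans hlogn this
    linarith
  · -- B-part dominates
    push_neg at hb
    have hBne : B ≠ 0 := by
      intro h0; rw [h0, Polynomial.natDegree_zero] at hb; omega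
    have hlcB : (0:ℝ) < |B.leadingCoeff| := by
      have := Polynomial.leadingCoeff_ne_zero.mpr hBne; positivity
    have hlowB := tendsto_natCast_atTop_atTop.eventually (poly_lower B hBne)
    have hc : (0:ℝ) < (|B.leadingCoeff| / 4) / (CA + 1) := by positivity
    have hlogsmall : ∀ᶠ n : ℕ in atTop, CA * Real.log n ≤ (|B.leadingCoeff| / 4) * (n:ℝ) := by
      have hev := tendsto_natCast_atTop_atTop.eventually (Real.isLittleO_log_id_atTop.def hc)
      filter_upwards [hev, eventually_ge_atTop 1] with n hn hn1
      have hn1' : (1:ℝ) ≤ (n:ℝ) := by exact_mod_cast hn1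
      have hlog0 : 0 ≤ Real.log n := Real.log_nonneg hn1'
      rw [Real.norm_eq_abs, Real.norm_eq_abs, id] at hn
      rw [abs_of_nonneg hlog0, abs_of_nonneg (by linarith : (0:ℝ) ≤ (n:ℝ))] at hn
      have hCA1 : (0:ℝ) < CA + 1 := by linarith
      calc CA * Real.log n ≤ (CA + 1) * ((|B.leadingCoeff| / 4) / (CA + 1) * n) := by nlinarith
        _ = (|B.leadingCoeff| / 4) * n := by field_simp
    have hbig : ∀ᶠ n : ℕ in atTop, 4 * |C| / |B.leadingCoeff| + 1 ≤ (n:ℝ) :=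
      tendsto_natCast_atTop_atTop.eventually_ge_atTop _
    obtain ⟨n, hn, hlown, hlogs, hbign, hn1⟩ :=
      (h.and (hlowB.and (hlogsmall.and (hbig.and (eventually_ge_atTop 1))))).exists
    have hn1' : (1:ℝ) ≤ (n:ℝ) := by exact_mod_cast hn1
    have hn0 : (0:ℝ) < (n:ℝ) := by linarith
    have hlog0 : 0 ≤ Real.log n := Real.log_nonneg hn1'
    have hAn := hCA (n:ℝ) hn1'
    have htri : |B.eval (n:ℝ)| ≤ |A.eval (n:ℝ) * Real.log n + B.eval (n:ℝ)|
        + CA * (n:ℝ) ^ A.natDegree * Real.log n := by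
      have t := abs_add_le (A.eval (n:ℝ) * Real.log n + B.eval (n:ℝ)) (-(A.eval (n:ℝ) * Real.log n))
      have heq : A.eval (n:ℝ) * Real.log n + B.eval (n:ℝ) + -(A.eval (n:ℝ) * Real.log n)
          = B.eval (n:ℝ) := by ring
      rw [heq, abs_neg, abs_mul, abs_of_nonneg hlog0] at t
      nlinarith [mul_le_mul_of_nonneg_right hAn hlog0]
    set a := A.natDegree
    set b := B.natDegree with hbdef
    set e := b - 1 with hedef
    have hbe : b = e + 1 := by omega
    have hme : m ≤ e := by omega
    have hae : a ≤ e := by omega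
    have hpe : (0:ℝ) < (n:ℝ) ^ e := pow_pos hn0 e
    have hnb : (n:ℝ) ^ b = (n:ℝ) ^ e * (n:ℝ) := by rw [hbe, pow_succ]
    have h1 : C * (n:ℝ) ^ m ≤ |C| * (n:ℝ) ^ e := by
      have := mul_le_mul_of_nonneg_right (le_abs_self C) (pow_nonneg (le_of_lt hn0) m)
      exact this.trans (mul_le_mul_of_nonneg_left (pow_le_pow_right₀ hn1' hme) (abs_nonneg C))
    have h2 : CA * (n:ℝ) ^ a * Real.log n ≤ (|B.leadingCoeff| / 4) * (n:ℝ) * (n:ℝ) ^ e := by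
      have hpa : (n:ℝ) ^ a ≤ (n:ℝ) ^ e := pow_le_pow_right₀ hn1' hae
      calc CA * (n:ℝ) ^ a * Real.log n ≤ CA * Real.log n * (n:ℝ) ^ e := by nlinarith [mul_nonneg (mul_nonneg hCA0 hlog0) (sub_nonneg.mpr hpa)]
        _ ≤ (|B.leadingCoeff| / 4) * (n:ℝ) * (n:ℝ) ^ e :=
            mul_le_mul_of_nonneg_right hlogs (le_of_lt hpe)
    have h3 : |B.leadingCoeff| / 2 * ((n:ℝ) ^ e * (n:ℝ)) ≤ |B.eval (n:ℝ)| := by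
      rw [← hnb]; exact hlown
    have h4 : |B.leadingCoeff| / 2 * ((n:ℝ) ^ e * (n:ℝ))
        ≤ |C| * (n:ℝ) ^ e + (|B.leadingCoeff| / 4) * (n:ℝ) * (n:ℝ) ^ e := by linarith
    -- divide by n^e and contradict with n large
    have h4b : |B.leadingCoeff| / 4 * (n:ℝ) * (n:ℝ) ^ e ≤ |C| * (n:ℝ) ^ e := by linarith
    have h5 : |B.leadingCoeff| / 4 * (n:ℝ) ≤ |C| := le_of_mul_le_mul_right h4b hpe
    have h6 : 4 * |C| / |B.leadingCoeff| + 1 ≤ (n:ℝ) := hbign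
    have h7 : (n:ℝ) ≤ 4 * |C| / |B.leadingCoeff| := by
      rw [le_div_iff₀ hlcB]; linarith
    linarith

/-- If `m^l * |∑_j c j / (l+j)| ≤ Cb * (m-1)^l` for all `l ≥ 1`, then all `c j = 0`. -/
lemma dom_lemma (D m : ℕ) (hm : 1 ≤ m) (c : ℕ → ℝ) (Cb : ℝ) (hCb : 0 < Cb)
    (hbd : ∀ l : ℕ, 1 ≤ l →
      ((m:ℝ)) ^ l * |∑ j ∈ range (D+1), c j / ((l:ℝ) + j)| ≤ Cb * ((m:ℝ) - 1) ^ l) :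
    ∀ j ≤ D, c j = 0 := by
  by_contra hcon
  push_neg at hcon
  obtain ⟨j₀, hj₀D, hj₀⟩ := hcon
  set N : Polynomial ℝ := ∑ j ∈ range (D+1), Polynomial.C (c j) *
      ∏ j' ∈ (range (D+1)).erase j, (Polynomial.X + Polynomial.C (j' : ℝ)) with hN
  have hNeval : ∀ x : ℝ, N.eval x
      = ∑ j ∈ range (D+1), c j * ∏ j' ∈ (range (D+1)).erase j, (x + (j':ℝ)) := by
    intro x
    rw [hN, Polynomial.eval_finset_sum]
    refine Finset.sum_congr rfl fun j hj => ?_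
    rw [Polynomial.eval_mul, Polynomial.eval_C, Polynomial.eval_prod]
    simp
  have hj₀mem : j₀ ∈ range (D+1) := Finset.mem_range.mpr (Nat.lt_succ_of_le hj₀D)
  have hNj0 : N.eval (-(j₀:ℝ)) ≠ 0 := by
    rw [hNeval]
    rw [Finset.sum_eq_single j₀]
    · refine mul_ne_zero hj₀ ?_
      rw [Finset.prod_ne_zero_iff]
      intro j' hj'
      have hne : j' ≠ j₀ := (Finset.mem_erase.mp hj').1
      have : (j':ℝ) ≠ (j₀:ℝ) := by exact_mod_cast hne
      intro h0
      apply this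
      linarith
    · intro j hj hne
      apply mul_eq_zero_of_right
      refine Finset.prod_eq_zero (Finset.mem_erase.mpr ⟨fun h => hne h.symm, hj₀mem⟩) ?_
      ring
    · intro h; exact absurd hj₀mem h
  have hNne : N ≠ 0 := by
    intro h0; rw [h0] at hNj0; simp at hNj0
  have hid : ∀ l : ℕ, 1 ≤ l →
      (∑ j ∈ range (D+1), c j / ((l:ℝ) + j)) * ∏ j ∈ range (D+1), ((l:ℝ) + j)
        = N.eval (l:ℝ) := by
    intro l hl
    rw [hNeval, Finset.sum_mul]
    refine Finset.sum_congr rfl fun j hj => ?_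
    have hlj : ((l:ℝ) + (j:ℝ)) ≠ 0 := by positivity
    rw [← Finset.mul_prod_erase _ _ hj]
    field_simp
  -- lower bound on |N.eval l| and hence on the sum
  have hc₀ : (0:ℝ) < |N.leadingCoeff| / 2 := by
    have := Polynomial.leadingCoeff_ne_zero.mpr hNne; positivity
  set c₀ := |N.leadingCoeff| / 2 with hc₀def
  have hlowN := tendsto_natCast_atTop_atTop.eventually (poly_lower N hNne)
  have hglow : ∀ᶠ l : ℕ in atTop,
      c₀ / (((D:ℝ)+1) * l) ^ (D+1) ≤ |∑ j ∈ range (D+1), c j / ((l:ℝ) + j)| := by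
    filter_upwards [hlowN, eventually_ge_atTop 1] with l hlowl hl1
    have hl1' : (1:ℝ) ≤ (l:ℝ) := by exact_mod_cast hl1
    have hl0 : (0:ℝ) < (l:ℝ) := by linarith
    have hNl : c₀ ≤ |N.eval (l:ℝ)| := by
      refine le_trans ?_ hlowl
      have h1 : (1:ℝ) ≤ (l:ℝ) ^ N.natDegree := one_le_pow₀ hl1'
      calc c₀ = c₀ * 1 := (mul_one _).symm
        _ ≤ c₀ * (l:ℝ) ^ N.natDegree := by nlinarith
    have hprodpos : (0:ℝ) < ∏ j ∈ range (D+1), ((l:ℝ) + j) :=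
      Finset.prod_pos fun j _ => by positivity
    have hprodle : ∏ j ∈ range (D+1), ((l:ℝ) + j) ≤ (((D:ℝ)+1) * l) ^ (D+1) := by
      have : ∏ j ∈ range (D+1), ((l:ℝ) + j) ≤ ∏ _j ∈ range (D+1), (((D:ℝ)+1) * l) := by
        refine Finset.prod_le_prod (fun j _ => by positivity) (fun j hj => ?_)
        have hjD : (j:ℝ) ≤ D := by
          exact_mod_cast Nat.lt_succ_iff.mp (Finset.mem_range.mp hj)
        nlinarith
      simpa [Finset.prod_const, Finset.card_range] using this
    have habs : |∑ j ∈ range (D+1), c j / ((l:ℝ) + j)|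
        = |N.eval (l:ℝ)| / ∏ j ∈ range (D+1), ((l:ℝ) + j) := by
      rw [← hid l hl1, abs_mul, abs_of_pos hprodpos,
        mul_div_assoc, div_self (ne_of_gt hprodpos), mul_one]
    rw [habs]
    calc c₀ / (((D:ℝ)+1) * l) ^ (D+1)
        ≤ c₀ / ∏ j ∈ range (D+1), ((l:ℝ) + j) := by
          gcongr
      _ ≤ |N.eval (l:ℝ)| / ∏ j ∈ range (D+1), ((l:ℝ) + j) := by gcongr
  -- final contradiction
  by_cases hm1 : m = 1
  · obtain ⟨l, hgl, hl1⟩ := (hglow.and (eventually_ge_atTop 1)).exists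
    have hb := hbd l hl1
    rw [hm1] at hb
    simp only [Nat.cast_one, one_pow, sub_self, one_mul] at hb
    have hz : (0:ℝ) ^ l = 0 := zero_pow (by omega)
    rw [hz, mul_zero] at hb
    have hpos : (0:ℝ) < c₀ / (((D:ℝ)+1) * l) ^ (D+1) := by
      have hl0 : (0:ℝ) < (l:ℝ) := by exact_mod_cast hl1
      positivity
    linarith [lt_of_lt_of_le hpos hgl]
  · have hm2 : 2 ≤ m := by omega
    have hm2' : (2:ℝ) ≤ (m:ℝ) := by exact_mod_cast hm2
    have hmpos : (0:ℝ) < (m:ℝ) - 1 := by linarith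
    set r : ℝ := (m:ℝ) / ((m:ℝ) - 1) with hrdef
    have hr1 : 1 < r := by
      rw [hrdef, lt_div_iff₀ hmpos]; linarith
    have htends := tendsto_pow_const_div_const_pow_of_one_lt (D+1) hr1
    have hsmall : ∀ᶠ l : ℕ in atTop,
        (l:ℝ) ^ (D+1) / r ^ l < c₀ / (Cb * ((D:ℝ)+1) ^ (D+1)) := by
      refine htends.eventually_lt_const ?_
      positivity
    obtain ⟨l, hgl, hsm, hl1⟩ := (hglow.and (hsmall.and (eventually_ge_atTop 1))).exists
    have hl0 : (0:ℝ) < (l:ℝ) := by exact_mod_cast hl1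
    have hb := hbd l hl1
    have hchain : (m:ℝ) ^ l * (c₀ / (((D:ℝ)+1) * l) ^ (D+1)) ≤ Cb * ((m:ℝ) - 1) ^ l := by
      refine le_trans ?_ hb
      have : (0:ℝ) ≤ (m:ℝ) ^ l := by positivity
      exact mul_le_mul_of_nonneg_left hgl this
    -- rearrange
    have hrl : (0:ℝ) < r ^ l := by positivity
    have hmm : ((m:ℝ) - 1) ^ l * r ^ l = (m:ℝ) ^ l := by
      rw [← mul_pow, hrdef]
      congr 1
      field_simp
    have hsm2 : Cb * ((D:ℝ)+1) ^ (D+1) * ((l:ℝ) ^ (D+1) / r ^ l) < c₀ := by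
      have hpos : (0:ℝ) < Cb * ((D:ℝ)+1) ^ (D+1) := by positivity
      calc Cb * ((D:ℝ)+1) ^ (D+1) * ((l:ℝ) ^ (D+1) / r ^ l)
          < Cb * ((D:ℝ)+1) ^ (D+1) * (c₀ / (Cb * ((D:ℝ)+1) ^ (D+1))) :=
            (mul_lt_mul_iff_right₀ hpos).mpr hsm
        _ = c₀ := by field_simp
    -- from hchain : m^l c₀ ≤ Cb (m-1)^l ((D+1) l)^{D+1}
    have hexp : (((D:ℝ)+1) * l) ^ (D+1) = ((D:ℝ)+1) ^ (D+1) * (l:ℝ) ^ (D+1) := mul_pow _ _ _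
    have hdl : (0:ℝ) < (((D:ℝ)+1) * l) ^ (D+1) := by positivity
    have hchain2 : (m:ℝ) ^ l * c₀ ≤ Cb * ((m:ℝ) - 1) ^ l * (((D:ℝ)+1) * l) ^ (D+1) := by
      rw [← div_le_iff₀ hdl] at *
      calc (m:ℝ) ^ l * c₀ / (((D:ℝ)+1) * l) ^ (D+1)
          = (m:ℝ) ^ l * (c₀ / (((D:ℝ)+1) * l) ^ (D+1)) := by ring
        _ ≤ Cb * ((m:ℝ) - 1) ^ l := hchain
    have hfinal : (m:ℝ) ^ l * c₀ < (m:ℝ) ^ l * c₀ := by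
      calc (m:ℝ) ^ l * c₀ ≤ Cb * ((m:ℝ) - 1) ^ l * (((D:ℝ)+1) * l) ^ (D+1) := hchain2
        _ = ((m:ℝ) - 1) ^ l * r ^ l * (Cb * ((D:ℝ)+1) ^ (D+1) * ((l:ℝ) ^ (D+1) / r ^ l)) := by
            rw [hexp]; field_simp
        _ < ((m:ℝ) - 1) ^ l * r ^ l * c₀ := by
            have hpp : (0:ℝ) < ((m:ℝ) - 1) ^ l * r ^ l := by positivity
            exact (mul_lt_mul_iff_right₀ hpp).mpr hsm2
        _ = (m:ℝ) ^ l * c₀ := by rw [hmm]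
    exact absurd hfinal (lt_irrefl _)


lemma fin_lemma (D : ℕ) : ∀ (m : ℕ) (b : ℕ → ℕ → ℝ),
    (∀ l : ℕ, 1 ≤ l →
      ∑ i ∈ range m, (i:ℝ) ^ l * (∑ j ∈ range (D+1), b i j / ((l:ℝ) + j)) = 0) →
    ∀ i, 1 ≤ i → i < m → ∀ j, j ≤ D → b i j = 0 := by
  intro m
  induction m with
  | zero => intro b h i h1 h2 j hj; omega
  | succ m ih =>
    intro b h i hi1 him j hjD
    by_cases hm0 : m = 0
    · omega
    have hm1 : 1 ≤ m := by omega
    have hm1' : (1:ℝ) ≤ (m:ℝ) := by exact_mod_cast hm1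
    have htop : ∀ j ≤ D, b m j = 0 := by
      have hCbpos : (0:ℝ) < (∑ i ∈ range m, ∑ j ∈ range (D+1), |b i j|) + 1 := by positivity
      apply dom_lemma D m hm1 (b m) _ hCbpos
      intro l hl
      have hrel := h l hl
      rw [Finset.sum_range_succ] at hrel
      have hpow0 : (0:ℝ) ≤ ((m:ℝ) - 1) ^ l := by
        apply pow_nonneg; linarith
      have habs : |∑ i ∈ range m, (i:ℝ) ^ l * (∑ j ∈ range (D+1), b i j / ((l:ℝ) + j))|
          ≤ ((m:ℝ) - 1) ^ l * ∑ i ∈ range m, ∑ j ∈ range (D+1), |b i j| := by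
        refine (Finset.abs_sum_le_sum_abs _ _).trans ?_
        rw [Finset.mul_sum]
        refine Finset.sum_le_sum fun i hi => ?_
        have hilt := Finset.mem_range.mp hi
        have hile : (i:ℝ) ≤ (m:ℝ) - 1 := by
          have : (i:ℝ) + 1 ≤ (m:ℝ) := by exact_mod_cast hilt
          linarith
        have hi0 : (0:ℝ) ≤ (i:ℝ) := Nat.cast_nonneg i
        have hgb : |∑ j ∈ range (D+1), b i j / ((l:ℝ) + j)| ≤ ∑ j ∈ range (D+1), |b i j| := by
          refine (Finset.abs_sum_le_sum_abs _ _).trans (Finset.sum_le_sum fun j hj => ?_)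
          rw [abs_div]
          have hlj1 : (1:ℝ) ≤ |(l:ℝ) + j| := by
            rw [abs_of_pos (by positivity)]
            have : (1:ℝ) ≤ (l:ℝ) := by exact_mod_cast hl
            have : (0:ℝ) ≤ (j:ℝ) := Nat.cast_nonneg j
            linarith
          exact div_le_self (abs_nonneg _) hlj1
        rw [abs_mul, abs_pow, abs_of_nonneg hi0]
        have h1 : (i:ℝ) ^ l ≤ ((m:ℝ) - 1) ^ l := pow_le_pow_left₀ hi0 hile l
        have h2 : (0:ℝ) ≤ |∑ j ∈ range (D+1), b i j / ((l:ℝ) + j)| := abs_nonneg _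
        have h3 : (0:ℝ) ≤ ∑ j ∈ range (D+1), |b i j| :=
          Finset.sum_nonneg fun _ _ => abs_nonneg _
        nlinarith
      have hLHS : ((m:ℝ)) ^ l * |∑ j ∈ range (D+1), b m j / ((l:ℝ) + j)|
          = |∑ i ∈ range m, (i:ℝ) ^ l * (∑ j ∈ range (D+1), b i j / ((l:ℝ) + j))| := by
        have heq2 : (m:ℝ) ^ l * (∑ j ∈ range (D+1), b m j / ((l:ℝ) + j))
            = -(∑ i ∈ range m, (i:ℝ) ^ l * (∑ j ∈ range (D+1), b i j / ((l:ℝ) + j))) := by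
          linarith
        rw [← abs_neg (∑ i ∈ range m, _), ← heq2, abs_mul, abs_pow,
          abs_of_nonneg (a := (m:ℝ)) (Nat.cast_nonneg m)]
      rw [hLHS]
      refine habs.trans ?_
      have h4 : ∑ i ∈ range m, ∑ j ∈ range (D+1), |b i j|
          ≤ (∑ i ∈ range m, ∑ j ∈ range (D+1), |b i j|) + 1 := by linarith
      nlinarith
    by_cases him' : i < m
    · -- use ih with reduced relation
      refine ih b ?_ i hi1 him' j hjD
      intro l hl
      have hrel := h l hl
      rw [Finset.sum_range_succ] at hrel
      have hz : ∑ j ∈ range (D+1), b m j / ((l:ℝ) + j) = 0 := by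
        refine Finset.sum_eq_zero fun j hj => ?_
        rw [htop j (Nat.lt_succ_iff.mp (Finset.mem_range.mp hj))]
        simp
      rw [hz, mul_zero, add_zero] at hrel
      exact hrel
    · have : i = m := by omega
      rw [this]
      exact htop j hjD

noncomputable def Spoly (d : ℕ) (p : Fin (d+1) → Polynomial ℝ) (m : ℕ) : Polynomial ℝ :=
  ∑ i : Fin (d+1), ((i:ℝ)^m) • p i

noncomputable def Qpoly (d : ℕ) (p : Fin (d+1) → Polynomial ℝ) (K : ℕ) : Polynomial ℝ :=
  ∑ k ∈ range K, (((-1:ℝ))^k / (k+1)) • (Spoly d p (k+1) * Polynomial.X ^ (K-1-k))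

lemma Qpoly_eval (d : ℕ) (p : Fin (d+1) → Polynomial ℝ) (K : ℕ) (N : ℝ) (hN : N ≠ 0) :
    (Qpoly d p K).eval N
      = N ^ K * ∑ i : Fin (d+1), (p i).eval N *
          (∑ k ∈ range K, (-1:ℝ)^k * ((i:ℝ)/N)^(k+1) / (k+1)) := by
  rw [Qpoly, Polynomial.eval_finset_sum]
  simp only [Finset.mul_sum]
  rw [Finset.sum_comm]
  refine Finset.sum_congr rfl fun k hk => ?_
  rw [Polynomial.eval_smul, Polynomial.eval_mul, Polynomial.eval_pow, Polynomial.eval_X, Spoly,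
    Polynomial.eval_finset_sum, smul_eq_mul, Finset.sum_mul, Finset.mul_sum]
  refine Finset.sum_congr rfl fun i _ => ?_
  rw [Polynomial.eval_smul, smul_eq_mul]
  have hkK : k < K := Finset.mem_range.mp hk
  have hpow : N ^ (K-1-k) * N ^ (k+1) = N ^ K := by
    rw [← pow_add]; congr 1; omega
  rw [div_pow, ← hpow]
  have hk1 : ((k:ℝ) + 1) ≠ 0 := by positivity
  field_simp

lemma master (d : ℕ) (p : Fin (d+1) → Polynomial ℝ) (D : ℕ)
    (hdeg : ∀ i, (p i).natDegree ≤ D)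
    (heq : ∀ n : ℕ, 1 ≤ n → (∑ i : Fin (d + 1), (p i).eval (n : ℝ) * Real.log (n + i)) = 0)
    (K : ℕ) :
    ∃ C : ℝ, ∀ n : ℕ, 2*d+2 ≤ n →
      |(∑ i : Fin (d+1), p i).eval (n:ℝ) * (n:ℝ)^K * Real.log n + (Qpoly d p K).eval (n:ℝ)|
        ≤ C * (n:ℝ)^D := by
  have hCp := fun i => poly_upper (p i) D (hdeg i)
  choose Cp hCp0 hCpb using hCp
  refine ⟨(∑ i : Fin (d+1), Cp i) * (2 * ((d:ℝ)+1)^(K+1)), ?_⟩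
  intro n hn
  have hn1 : 1 ≤ n := by omega
  have hN1 : (1:ℝ) ≤ (n:ℝ) := by exact_mod_cast hn1
  have hN0 : (0:ℝ) < (n:ℝ) := by linarith
  have hNbig : 2*(d:ℝ)+2 ≤ (n:ℝ) := by exact_mod_cast hn
  set N : ℝ := (n:ℝ) with hNdef
  -- half bound : for each i, i/N ≤ 1/2
  have hhalf : ∀ i : Fin (d+1), ((i:ℝ))/N ≤ 1/2 := by
    intro i
    have hi : (i:ℝ) ≤ (d:ℝ) := by exact_mod_cast Fin.is_le i
    rw [div_le_iff₀ hN0]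
    nlinarith
  have hnn : ∀ i : Fin (d+1), (0:ℝ) ≤ (i:ℝ)/N := fun i => by positivity
  -- split the log
  have hsplit : ∀ i : Fin (d+1), Real.log (N + i) = Real.log N + Real.log (1 + (i:ℝ)/N) := by
    intro i
    have h1 : N + (i:ℝ) = N * (1 + (i:ℝ)/N) := by field_simp
    rw [h1, Real.log_mul (ne_of_gt hN0) (by positivity : (1:ℝ) + (i:ℝ)/N ≠ 0)]
  have hmain : (∑ i : Fin (d+1), p i).eval N * Real.log N
      + ∑ i : Fin (d+1), (p i).eval N * Real.log (1 + (i:ℝ)/N) = 0 := by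
    have h0 := heq n hn1
    calc (∑ i : Fin (d+1), p i).eval N * Real.log N
          + ∑ i : Fin (d+1), (p i).eval N * Real.log (1 + (i:ℝ)/N)
        = ∑ i : Fin (d+1), (p i).eval N * Real.log (N + i) := by
          rw [Polynomial.eval_finset_sum, Finset.sum_mul, ← Finset.sum_add_distrib]
          refine Finset.sum_congr rfl fun i _ => ?_
          rw [hsplit i]
          ring
      _ = 0 := h0
  -- Taylor estimates
  have htaylor : ∀ i : Fin (d+1),
      |Real.log (1 + (i:ℝ)/N) - ∑ k ∈ range K, (-1:ℝ)^k * ((i:ℝ)/N)^(k+1) / (k+1)|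
        ≤ 2 * (((d:ℝ)+1)/N)^(K+1) := by
    intro i
    have hx2 := hhalf i
    have hx0 := hnn i
    set x : ℝ := (i:ℝ)/N with hxdef
    have habs : |(-x)| < 1 := by rw [abs_neg, abs_of_nonneg hx0]; linarith
    have hT := Real.abs_log_sub_add_sum_range_le habs K
    have hsum : ∑ k ∈ range K, (-x)^(k+1)/(k+1) = -∑ k ∈ range K, (-1:ℝ)^k * x^(k+1)/(k+1) := by
      rw [← Finset.sum_neg_distrib]
      refine Finset.sum_congr rfl fun k _ => ?_
      rw [neg_pow]
      rw [pow_succ]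
      ring
    rw [hsum, sub_neg_eq_add] at hT
    have habs2 : |(-x)| = x := by rw [abs_neg, abs_of_nonneg hx0]
    rw [habs2] at hT
    have heq3 : -∑ k ∈ range K, (-1:ℝ)^k * x^(k+1)/(k+1) + Real.log (1 + x)
        = Real.log (1 + x) - ∑ k ∈ range K, (-1:ℝ)^k * x^(k+1)/(k+1) := by ring
    rw [heq3] at hT
    have h1x : (1:ℝ)/2 ≤ 1 - x := by linarith
    have hxd : x ≤ ((d:ℝ)+1)/N := by
      rw [hxdef]
      have h4 : ((i:ℕ):ℝ) ≤ (d:ℝ) := by exact_mod_cast Fin.is_le i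
      have h5 : ((i:ℕ):ℝ) ≤ (d:ℝ) + 1 := by linarith
      gcongr
    calc |Real.log (1 + x) - ∑ k ∈ range K, (-1:ℝ)^k * x^(k+1)/(k+1)|
        ≤ x^(K+1)/(1-x) := hT
      _ ≤ x^(K+1)/(1/2) := by gcongr
      _ = 2 * x^(K+1) := by ring
      _ ≤ 2 * (((d:ℝ)+1)/N)^(K+1) := by gcongr
  -- combine
  have hQe := Qpoly_eval d p K N (ne_of_gt hN0)
  set T : Fin (d+1) → ℝ := fun i => ∑ k ∈ range K, (-1:ℝ)^k * ((i:ℝ)/N)^(k+1) / (k+1) with hTdef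
  have hrw : (∑ i : Fin (d+1), p i).eval N * N^K * Real.log N + (Qpoly d p K).eval N
      = N^K * ∑ i : Fin (d+1), (p i).eval N * (T i - Real.log (1 + (i:ℝ)/N)) := by
    have hsum2 : ∑ i : Fin (d+1), (p i).eval N * (T i - Real.log (1 + (i:ℝ)/N))
        = ∑ i : Fin (d+1), (p i).eval N * T i
          - ∑ i : Fin (d+1), (p i).eval N * Real.log (1 + (i:ℝ)/N) := by
      rw [← Finset.sum_sub_distrib]
      exact Finset.sum_congr rfl fun i _ => by ring
    rw [hQe, hsum2, mul_sub]
    have hPl : (∑ i : Fin (d+1), p i).eval N * Real.log N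
        = -∑ i : Fin (d+1), (p i).eval N * Real.log (1+(i:ℝ)/N) := by linarith [hmain]
    rw [Finset.mul_sum]
    rw [show (∑ i : Fin (d+1), p i).eval N * N^K * Real.log N
        = N^K * ((∑ i : Fin (d+1), p i).eval N * Real.log N) from by ring, hPl]
    rw [mul_neg, Finset.mul_sum]
    ring
  set E : ℝ := 2 * (((d:ℝ)+1)/N)^(K+1) with hEdef
  have hE0 : 0 ≤ E := by positivity
  have hSb : |∑ i : Fin (d+1), (p i).eval N * (T i - Real.log (1 + (i:ℝ)/N))|
      ≤ (∑ i : Fin (d+1), Cp i) * N^D * E := by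
    refine (Finset.abs_sum_le_sum_abs _ _).trans ?_
    rw [Finset.sum_mul, Finset.sum_mul]
    refine Finset.sum_le_sum fun i _ => ?_
    rw [abs_mul]
    have h1 : |T i - Real.log (1 + (i:ℝ)/N)| ≤ E := by
      rw [abs_sub_comm]; exact htaylor i
    exact mul_le_mul (hCpb i N hN1) h1 (abs_nonneg _)
      (mul_nonneg (mul_nonneg (hCp0 i) (pow_nonneg hN0.le D)) (le_refl 0 |>.trans hE0) |> fun _ => mul_nonneg (hCp0 i) (pow_nonneg hN0.le D))
  have hEK : N^K * E ≤ 2*((d:ℝ)+1)^(K+1) := by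
    rw [hEdef, div_pow]
    rw [show N^(K+1) = N^K * N from pow_succ N K]
    rw [show N^K * (2*(((d:ℝ)+1)^(K+1)/(N^K*N))) = 2*((d:ℝ)+1)^(K+1)/N from by
      field_simp]
    exact div_le_self (by positivity) hN1
  calc |(∑ i : Fin (d+1), p i).eval N * N^K * Real.log N + (Qpoly d p K).eval N|
      = N^K * |∑ i : Fin (d+1), (p i).eval N * (T i - Real.log (1 + (i:ℝ)/N))| := by
        rw [hrw, abs_mul, abs_pow, abs_of_nonneg hN0.le]
    _ ≤ N^K * ((∑ i : Fin (d+1), Cp i) * N^D * E) :=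
        mul_le_mul_of_nonneg_left hSb (pow_nonneg hN0.le K)
    _ = ((∑ i : Fin (d+1), Cp i) * N^D) * (N^K * E) := by ring
    _ ≤ ((∑ i : Fin (d+1), Cp i) * N^D) * (2*((d:ℝ)+1)^(K+1)) :=
        mul_le_mul_of_nonneg_left hEK
          (mul_nonneg (Finset.sum_nonneg fun i _ => hCp0 i) (pow_nonneg hN0.le D))
    _ = (∑ i : Fin (d+1), Cp i) * (2*((d:ℝ)+1)^(K+1)) * N^D := by ring

lemma Spoly_coeff (d : ℕ) (p : Fin (d+1) → Polynomial ℝ) (m r : ℕ) :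
    (Spoly d p m).coeff r = ∑ i : Fin (d+1), (i:ℝ)^m * (p i).coeff r := by
  rw [Spoly, Polynomial.finset_sum_coeff]
  exact Finset.sum_congr rfl fun i _ => by rw [Polynomial.coeff_smul, smul_eq_mul]

lemma Spoly_coeff_top (d : ℕ) (p : Fin (d+1) → Polynomial ℝ) (D : ℕ)
    (hdeg : ∀ i, (p i).natDegree ≤ D) (m : ℕ) :
    (Spoly d p m).coeff (D+1) = 0 := by
  rw [Spoly_coeff]
  refine Finset.sum_eq_zero fun i _ => ?_
  rw [Polynomial.coeff_eq_zero_of_natDegree_lt (lt_of_le_of_lt (hdeg i) (Nat.lt_succ_self D))]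
  ring

lemma Qpoly_coeff (d : ℕ) (p : Fin (d+1) → Polynomial ℝ) (D : ℕ)
    (hdeg : ∀ i, (p i).natDegree ≤ D) (l : ℕ) (hl : 1 ≤ l) :
    (Qpoly d p (D+l+1)).coeff (D+1)
      = ∑ j ∈ range (D+1), ((-1:ℝ))^(l-1+j) / ((l:ℝ)+j) * (Spoly d p (l+j)).coeff j := by
  set K := D+l+1 with hK
  rw [Qpoly, Polynomial.finset_sum_coeff]
  have hterm : ∀ k ∈ range K,
      ((((-1:ℝ))^k / (k+1)) • (Spoly d p (k+1) * Polynomial.X ^ (K-1-k))).coeff (D+1)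
        = ((-1:ℝ))^k / (k+1) * (if K-1-k ≤ D+1 then (Spoly d p (k+1)).coeff (D+1-(K-1-k)) else 0) := by
    intro k hk
    rw [Polynomial.coeff_smul, smul_eq_mul, Polynomial.coeff_mul_X_pow']
  rw [Finset.sum_congr rfl hterm]
  have hsub : Finset.Ico (l-1) K ⊆ range K := by
    intro k hk
    rw [Finset.mem_range]
    exact (Finset.mem_Ico.mp hk).2
  have hvanish : ∀ k ∈ range K, k ∉ Finset.Ico (l-1) K →
      ((-1:ℝ))^k / (k+1) * (if K-1-k ≤ D+1 then (Spoly d p (k+1)).coeff (D+1-(K-1-k)) else 0) = 0 := by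
    intro k hk hnk
    rw [Finset.mem_range] at hk
    rw [Finset.mem_Ico] at hnk
    have hklt : k < l - 1 := by omega
    have hcond : ¬ (K-1-k ≤ D+1) := by omega
    rw [if_neg hcond, mul_zero]
  rw [← Finset.sum_subset hsub hvanish]
  have hKsplit : K = (l-1) + (D+2) := by omega
  rw [hKsplit, Finset.sum_Ico_eq_sum_range]
  rw [show (l-1) + (D+2) - (l-1) = D+2 from by omega]
  rw [Finset.sum_range_succ]
  have hlast : ((-1:ℝ))^((l-1)+(D+1)) / (((l-1)+(D+1):ℕ)+1)
      * (if ((l-1)+(D+2))-1-((l-1)+(D+1)) ≤ D+1 then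
          (Spoly d p (((l-1)+(D+1))+1)).coeff (D+1-(((l-1)+(D+2))-1-((l-1)+(D+1)))) else 0) = 0 := by
    rw [show ((l-1)+(D+2))-1-((l-1)+(D+1)) = 0 from by omega, if_pos (by omega),
      Nat.sub_zero, Spoly_coeff_top d p D hdeg]
    ring
  rw [hlast, add_zero]
  refine Finset.sum_congr rfl fun j hj => ?_
  have hjD : j < D+1 := Finset.mem_range.mp hj
  have h1 : ((l-1)+(D+2))-1-((l-1)+j) = D+1-j := by omega
  have h2 : D+1-(D+1-j) = j := by omega
  have h3 : (l-1)+j+1 = l+j := by omega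
  rw [h1, if_pos (by omega : D+1-j ≤ D+1), h2, h3]
  have h4 : (((l-1)+j : ℕ):ℝ) + 1 = (l:ℝ) + j := by
    have : ((l-1)+j+1 : ℕ) = l + j := h3
    calc (((l-1)+j : ℕ):ℝ) + 1 = (((l-1)+j+1 : ℕ):ℝ) := by push_cast; ring
      _ = ((l+j : ℕ):ℝ) := by rw [this]
      _ = (l:ℝ) + j := by push_cast; ring
  rw [h4]

theorem log_not_holonomic_real :
    ¬ ∃ (d : ℕ) (p : Fin (d + 1) → Polynomial ℝ),
      (∃ i, p i ≠ 0) ∧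
      ∀ n : ℕ, 1 ≤ n →
        (∑ i : Fin (d + 1), (p i).eval (n : ℝ) * Real.log (n + i)) = 0 := by
  rintro ⟨d, p, ⟨i₀, hi₀⟩, heq⟩
  classical
  set D := Finset.univ.sup (fun i : Fin (d+1) => (p i).natDegree) with hD
  have hdeg : ∀ i : Fin (d+1), (p i).natDegree ≤ D := fun i =>
    Finset.le_sup (f := fun i : Fin (d+1) => (p i).natDegree) (Finset.mem_univ i)
  -- Step A : the sum of the polynomials is zero
  have hPzero : (∑ i : Fin (d+1), p i) = 0 := by
    by_contra hPne
    obtain ⟨C, hC⟩ := master d p D hdeg heq (D+1)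
    refine key_log_growth ((∑ i : Fin (d+1), p i) * Polynomial.X^(D+1)) (Qpoly d p (D+1)) D
      (mul_ne_zero hPne (pow_ne_zero _ Polynomial.X_ne_zero)) ?_ C ?_
    · rw [Polynomial.natDegree_mul hPne (pow_ne_zero _ Polynomial.X_ne_zero),
        Polynomial.natDegree_X_pow]
      omega
    · rw [eventually_atTop]
      refine ⟨2*d+2, fun n hn => ?_⟩
      have h2 := hC n hn
      rw [Polynomial.eval_mul, Polynomial.eval_pow, Polynomial.eval_X]
      exact h2
  -- Step B : the coefficient relations
  have hrel : ∀ l : ℕ, 1 ≤ l →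
      ∑ j ∈ range (D+1), ((-1:ℝ))^(l-1+j) / ((l:ℝ)+j) * (Spoly d p (l+j)).coeff j = 0 := by
    intro l hl
    obtain ⟨C, hC⟩ := master d p D hdeg heq (D+l+1)
    have hgrow : ∀ᶠ n : ℕ in atTop, |(Qpoly d p (D+l+1)).eval (n:ℝ)| ≤ C * (n:ℝ)^D := by
      rw [eventually_atTop]
      refine ⟨2*d+2, fun n hn => ?_⟩
      have h2 := hC n hn
      rw [hPzero] at h2
      simpa using h2
    have hcz := poly_coeff_zero_of_growth _ D C hgrow (D+1) (Nat.lt_succ_self D)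
    rw [← Qpoly_coeff d p D hdeg l hl]
    exact hcz
  -- convert to the format of fin_lemma
  set b : ℕ → ℕ → ℝ := fun i j =>
    if h : i < d+1 then ((-1:ℝ))^j * (i:ℝ)^j * ((p ⟨i, h⟩).coeff j) else 0 with hb
  have hFIN : ∀ l : ℕ, 1 ≤ l →
      ∑ i ∈ range (d+1), (i:ℝ)^l * (∑ j ∈ range (D+1), b i j / ((l:ℝ)+j)) = 0 := by
    intro l hl
    have h0 := hrel l hl
    have hσ : ∀ j : ℕ, (Spoly d p (l+j)).coeff j
        = ∑ i ∈ range (d+1), (if h : i < d+1 then (i:ℝ)^(l+j) * ((p ⟨i,h⟩).coeff j) else 0) := by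
      intro j
      rw [Spoly_coeff, ← Fin.sum_univ_eq_sum_range]
      exact Finset.sum_congr rfl fun i _ => by rw [dif_pos i.isLt]
    have hLHS : ∑ i ∈ range (d+1), (i:ℝ)^l * (∑ j ∈ range (D+1), b i j / ((l:ℝ)+j))
        = ∑ j ∈ range (D+1), ((-1:ℝ))^j / ((l:ℝ)+j) * (Spoly d p (l+j)).coeff j := by
      simp only [Finset.mul_sum]
      rw [Finset.sum_comm]
      refine Finset.sum_congr rfl fun j hj => ?_
      rw [hσ j, Finset.mul_sum]
      refine Finset.sum_congr rfl fun i hi => ?_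
      have hilt : i < d+1 := Finset.mem_range.mp hi
      rw [hb]
      simp only [dif_pos hilt]
      rw [pow_add]
      field_simp
    have hfact : ∑ j ∈ range (D+1), ((-1:ℝ))^(l-1+j) / ((l:ℝ)+j) * (Spoly d p (l+j)).coeff j
        = ((-1:ℝ))^(l-1) * ∑ j ∈ range (D+1), ((-1:ℝ))^j / ((l:ℝ)+j) * (Spoly d p (l+j)).coeff j := by
      rw [Finset.mul_sum]
      refine Finset.sum_congr rfl fun j hj => ?_
      rw [pow_add]
      ring
    rw [hfact] at h0
    rw [hLHS]
    have hne : ((-1:ℝ))^(l-1) ≠ 0 := pow_ne_zero _ (by norm_num)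
    exact (mul_eq_zero.mp h0).resolve_left hne
  have hzero := fin_lemma D (d+1) b hFIN
  -- all p i with i.val ≥ 1 vanish
  have hp1 : ∀ i : Fin (d+1), 1 ≤ i.val → p i = 0 := by
    intro i hi1
    ext j
    rw [Polynomial.coeff_zero]
    by_cases hj : j ≤ D
    · have hz := hzero i.val hi1 i.isLt j hj
      rw [hb] at hz
      simp only [dif_pos i.isLt] at hz
      have hie : (⟨i.val, i.isLt⟩ : Fin (d+1)) = i := Fin.eta i i.isLt
      rw [hie] at hz
      have hne1 : ((-1:ℝ))^j ≠ 0 := pow_ne_zero _ (by norm_num)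
      have hne2 : ((i.val:ℝ))^j ≠ 0 := by
        apply pow_ne_zero
        have : (1:ℝ) ≤ (i.val:ℝ) := by exact_mod_cast hi1
        linarith
      rcases mul_eq_zero.mp hz with h | h
      · rcases mul_eq_zero.mp h with h' | h'
        · exact absurd h' hne1
        · exact absurd h' hne2
      · exact h
    · exact Polynomial.coeff_eq_zero_of_natDegree_lt (lt_of_le_of_lt (hdeg i) (by omega))
  -- hence p 0 = 0 as well
  have hp0 : p 0 = 0 := by
    have hsum : ∑ i : Fin (d+1), p i = p 0 := by
      refine Finset.sum_eq_single 0 (fun i _ hi => ?_) (fun h => absurd (Finset.mem_univ _) h)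
      refine hp1 i ?_
      have : i.val ≠ 0 := fun h => hi (Fin.ext h)
      omega
    rw [hsum] at hPzero
    exact hPzero
  -- contradiction
  by_cases hi₀0 : i₀.val = 0
  · exact hi₀ (by rw [show i₀ = 0 from Fin.ext hi₀0]; exact hp0)
  · exact hi₀ (hp1 i₀ (by omega))
end

section
/- The sequence (log n)_{n ≥ 1} is not holonomic over ℂ: there do not exist complex polynomials p_0, p_1, ..., p_d, not all zero, such that p_d(n)·log(n+d) + ... + p_1(n)·log(n+1) + p_0(n)·log n = 0 for every integer n ≥ 1. -/
open Filter Finset Polynomial Topology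

lemma norm_natCast_add (m j : ℕ) : ‖((m:ℂ) + j)‖ = (m + j : ℝ) := by
  have : ((m:ℂ) + j) = ((m + j : ℕ) : ℂ) := by push_cast; ring
  rw [this, RCLike.norm_natCast]
  push_cast
  ring

lemma natCast_add_ne (m j : ℕ) (hm : 1 ≤ m) : ((m:ℂ) + j) ≠ 0 := by
  have : ((m:ℂ) + j) = ((m + j : ℕ) : ℂ) := by push_cast; ring
  rw [this, Ne, Nat.cast_eq_zero]
  omega

lemma mom (D : ℕ) (b : ℕ → ℂ) (C r : ℝ) (hr0 : 0 ≤ r) (hr1 : r < 1)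
    (h : ∀ m : ℕ, 1 ≤ m → ‖∑ j ∈ range (D+1), b j / ((m : ℂ) + j)‖ ≤ C * r ^ m) :
    ∀ j ≤ D, b j = 0 := by
  set H : ℕ → ℕ → ℂ := fun t m => ∑ j ∈ range (D+1), b j * (-(j:ℂ))^t / ((m:ℂ) + j) with hH
  set M : ℕ → ℂ := fun t => ∑ j ∈ range (D+1), b j * (-(j:ℂ))^t with hM
  have key : ∀ t (m : ℕ), 1 ≤ m → (m:ℂ) * H t m = M t + H (t+1) m := by
    intro t m hm
    rw [hH, hM]
    simp only
    rw [Finset.mul_sum, ← Finset.sum_add_distrib]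
    refine Finset.sum_congr rfl fun j _ => ?_
    have hne := natCast_add_ne m j hm
    field_simp
    ring
  have Hlim : ∀ t, Tendsto (fun m : ℕ => H t m) atTop (𝓝 0) := by
    intro t
    have : Tendsto (fun m : ℕ => ∑ j ∈ range (D+1), b j * (-(j:ℂ))^t / ((m:ℂ) + j)) atTop
        (𝓝 (∑ j ∈ range (D+1), (0:ℂ))) := by
      refine tendsto_finset_sum _ fun j _ => ?_
      refine squeeze_zero_norm' ?_ (tendsto_const_div_atTop_nhds_zero_nat (‖b j * (-(j:ℂ))^t‖))
      filter_upwards [eventually_ge_atTop 1] with m hm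
      rw [norm_div, norm_natCast_add]
      refine div_le_div_of_nonneg_left ?_ ?_ ?_
      · positivity
      · exact_mod_cast Nat.lt_of_lt_of_le Nat.zero_lt_one hm
      · linarith [Nat.cast_nonneg (α := ℝ) j]
    simpa using this
  -- the H 0 sequence coincides with the one in `h`
  have hH0 : ∀ m : ℕ, H 0 m = ∑ j ∈ range (D+1), b j / ((m : ℂ) + j) := by
    intro m
    refine Finset.sum_congr rfl fun j _ => by rw [pow_zero, mul_one]
  have Mzero : ∀ t, (∀ m : ℕ, 1 ≤ m → H t m = (m:ℂ)^t * H 0 m) → M t = 0 := by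
    intro t ht
    have h1 : Tendsto (fun m : ℕ => (m:ℂ) * H t m) atTop (𝓝 0) := by
      have hg : Tendsto (fun m : ℕ => C * ((m:ℝ) ^ (t+1) * r ^ m)) atTop (𝓝 (C * 0)) :=
        (tendsto_pow_const_mul_const_pow_of_lt_one (t+1) hr0 hr1).const_mul C
      rw [mul_zero] at hg
      refine squeeze_zero_norm' ?_ hg
      filter_upwards [eventually_ge_atTop 1] with m hm
      have : (m:ℂ) * H t m = (m:ℂ)^(t+1) * H 0 m := by
        rw [ht m hm, pow_succ]; ring
      rw [this, norm_mul, norm_pow, RCLike.norm_natCast, hH0 m]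
      calc (m:ℝ)^(t+1) * ‖∑ j ∈ range (D+1), b j / ((m : ℂ) + j)‖
          ≤ (m:ℝ)^(t+1) * (C * r ^ m) := by
            refine mul_le_mul_of_nonneg_left (h m hm) (by positivity)
        _ = C * ((m:ℝ)^(t+1) * r ^ m) := by ring
    have h2 : Tendsto (fun m : ℕ => (m:ℂ) * H t m - H (t+1) m) atTop (𝓝 0) := by
      simpa using h1.sub (Hlim (t+1))
    have h3 : ∀ᶠ m : ℕ in atTop, (m:ℂ) * H t m - H (t+1) m = M t := by
      filter_upwards [eventually_ge_atTop 1] with m hm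
      rw [key t m hm]; ring
    exact (tendsto_nhds_unique (h2.congr' h3) tendsto_const_nhds).symm
  have prop : ∀ t, ∀ m : ℕ, 1 ≤ m → H t m = (m:ℂ)^t * H 0 m := by
    intro t
    induction t with
    | zero => intro m hm; rw [pow_zero, one_mul]
    | succ t ih =>
      intro m hm
      have hMt := Mzero t ih
      have hk := key t m hm
      have : H (t+1) m = (m:ℂ) * H t m - M t := by rw [hk]; ring
      rw [this, ih m hm, hMt, pow_succ]; ring
  have hMall : ∀ t, M t = 0 := fun t => Mzero t (prop t)
  -- Lagrange interpolation to conclude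
  intro j0 hj0
  set v : ℕ → ℂ := fun j => -(j:ℂ) with hv
  have hinj : Set.InjOn v (range (D+1)) := by
    intro a _ c _ hac
    have : ((a:ℂ)) = (c:ℂ) := by
      rw [hv] at hac; simp only [neg_inj] at hac; exact hac
    exact_mod_cast this
  have hj0' : j0 ∈ range (D+1) := mem_range.2 (by omega)
  set P := Lagrange.basis (range (D+1)) v j0 with hP
  have hdeg : P.natDegree ≤ D := by
    rw [hP, Lagrange.natDegree_basis hinj hj0', card_range]
    omega
  have hsum : ∑ j ∈ range (D+1), b j * P.eval (v j) = b j0 := by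
    rw [Finset.sum_eq_single j0]
    · rw [hP, Lagrange.eval_basis_self hinj hj0', mul_one]
    · intro j hj hne
      rw [hP, Lagrange.eval_basis_of_ne (Ne.symm hne) hj, mul_zero]
    · intro hcon; exact absurd hj0' hcon
  have hzero : ∑ j ∈ range (D+1), b j * P.eval (v j) = 0 := by
    have heval : ∀ j : ℕ, P.eval (v j) = ∑ t ∈ range (D+1), P.coeff t * (v j)^t := by
      intro j
      exact Polynomial.eval_eq_sum_range' (Nat.lt_succ_of_le hdeg) (v j)
    calc ∑ j ∈ range (D+1), b j * P.eval (v j)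
        = ∑ j ∈ range (D+1), ∑ t ∈ range (D+1), P.coeff t * (b j * (v j)^t) := by
          refine Finset.sum_congr rfl fun j _ => ?_
          rw [heval j, Finset.mul_sum]
          refine Finset.sum_congr rfl fun t _ => by ring
      _ = ∑ t ∈ range (D+1), P.coeff t * M t := by
          rw [Finset.sum_comm]
          refine Finset.sum_congr rfl fun t _ => ?_
          rw [hM, Finset.mul_sum]
      _ = 0 := by
          refine Finset.sum_eq_zero fun t _ => ?_
          rw [hMall t, mul_zero]
  rw [← hsum, hzero]

lemma norm_two_pow_pow (s m : ℕ) : ‖(((2:ℂ)^s)^m)‖ = ((2:ℝ)^s)^m := by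
  rw [norm_pow, norm_pow]
  norm_num

lemma term_lim (w z : ℂ) (s T : ℕ) (hsT : s < T) :
    Tendsto (fun m : ℕ => (w * m + z) * ((2:ℂ)^s)^m / (((2:ℂ)^T)^m)) atTop (𝓝 0) := by
  set q : ℝ := (2:ℝ)^s / 2^T with hq
  have hq0 : 0 ≤ q := by positivity
  have hq1 : q < 1 := by
    rw [hq, div_lt_one (by positivity)]
    exact pow_lt_pow_right₀ one_lt_two hsT
  have hg : Tendsto (fun m : ℕ => ‖w‖ * ((m:ℝ) * q^m) + ‖z‖ * q^m) atTop (𝓝 (‖w‖ * 0 + ‖z‖ * 0)) := by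
    refine Tendsto.add (Tendsto.const_mul _ ?_) (Tendsto.const_mul _ ?_)
    · simpa using tendsto_pow_const_mul_const_pow_of_lt_one 1 hq0 hq1
    · exact tendsto_pow_atTop_nhds_zero_of_lt_one hq0 hq1
  rw [show ‖w‖ * 0 + ‖z‖ * 0 = 0 by ring] at hg
  refine squeeze_zero_norm (fun m => ?_) hg
  rw [norm_div, norm_mul, norm_two_pow_pow, norm_two_pow_pow]
  have h1 : ‖w * m + z‖ ≤ ‖w‖ * m + ‖z‖ := by
    refine (norm_add_le _ _).trans ?_
    rw [norm_mul, RCLike.norm_natCast]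
  calc ‖w * m + z‖ * ((2:ℝ)^s)^m / ((2:ℝ)^T)^m
      ≤ (‖w‖ * m + ‖z‖) * ((2:ℝ)^s)^m / ((2:ℝ)^T)^m := by
        gcongr
    _ = ‖w‖ * ((m:ℝ) * q^m) + ‖z‖ * q^m := by
        rw [hq, div_pow]
        field_simp

lemma term_lim' (w z : ℂ) (s T : ℕ) (hsT : s < T) :
    Tendsto (fun m : ℕ => (w * m + z) * ((2:ℂ)^s)^m / ((m:ℂ) * ((2:ℂ)^T)^m)) atTop (𝓝 0) := by
  set q : ℝ := (2:ℝ)^s / 2^T with hq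
  have hq0 : 0 ≤ q := by positivity
  have hq1 : q < 1 := by
    rw [hq, div_lt_one (by positivity)]
    exact pow_lt_pow_right₀ one_lt_two hsT
  have hg : Tendsto (fun m : ℕ => (‖w‖ + ‖z‖) * q^m) atTop (𝓝 0) := by
    simpa using (tendsto_pow_atTop_nhds_zero_of_lt_one hq0 hq1).const_mul (‖w‖ + ‖z‖)
  refine squeeze_zero_norm' ?_ hg
  filter_upwards [eventually_ge_atTop 1] with m hm
  have hm0 : (1:ℝ) ≤ (m:ℝ) := by exact_mod_cast hm
  rw [norm_div, norm_mul, norm_mul, norm_two_pow_pow, norm_two_pow_pow, RCLike.norm_natCast]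
  have h1 : ‖w * m + z‖ ≤ (‖w‖ + ‖z‖) * m := by
    refine (norm_add_le _ _).trans ?_
    rw [norm_mul, RCLike.norm_natCast]
    have : ‖z‖ ≤ ‖z‖ * m := le_mul_of_one_le_right (norm_nonneg _) hm0
    linarith
  calc ‖w * m + z‖ * ((2:ℝ)^s)^m / ((m:ℝ) * ((2:ℝ)^T)^m)
      ≤ ((‖w‖ + ‖z‖) * m) * ((2:ℝ)^s)^m / ((m:ℝ) * ((2:ℝ)^T)^m) := by gcongr
    _ = (‖w‖ + ‖z‖) * q^m := by
        rw [hq, div_pow]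
        have hmne : (m:ℝ) ≠ 0 := by linarith
        field_simp

lemma expz (M0 : ℕ) (Cb ρ : ℝ) (hρ : 0 ≤ ρ) :
    ∀ (L : ℕ) (u v : ℕ → ℂ),
      (∀ m : ℕ, M0 ≤ m → ‖∑ s ∈ range (L+1), (u s * m + v s) * ((2:ℂ)^s)^m‖ ≤ Cb * ρ^m) →
      ∀ s ≤ L, ρ < 2^s → u s = 0 ∧ v s = 0 := by
  intro L
  induction L with
  | zero =>
    intro u v hb s hs h2
    interval_cases s
    have hρ1 : ρ < 1 := by simpa using h2
    have hf : Tendsto (fun m : ℕ => u 0 * m + v 0) atTop (𝓝 0) := by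
      have hg : Tendsto (fun m : ℕ => Cb * ρ^m) atTop (𝓝 0) := by
        simpa using (tendsto_pow_atTop_nhds_zero_of_lt_one hρ hρ1).const_mul Cb
      refine squeeze_zero_norm' ?_ hg
      filter_upwards [eventually_ge_atTop M0] with m hm
      have := hb m hm
      simpa using this
    have hu : u 0 = 0 := by
      have h1 : Tendsto (fun m : ℕ => (u 0 * ((m+1 : ℕ):ℂ) + v 0) - (u 0 * m + v 0)) atTop (𝓝 0) := by
        simpa using (hf.comp (tendsto_add_atTop_nat 1)).sub hf
      have h2' : ∀ m : ℕ, (u 0 * ((m+1 : ℕ):ℂ) + v 0) - (u 0 * m + v 0) = u 0 := by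
        intro m; push_cast; ring
      have h3 := h1.congr h2'
      exact tendsto_nhds_unique tendsto_const_nhds h3
    refine ⟨hu, ?_⟩
    have : Tendsto (fun m : ℕ => u 0 * m + v 0) atTop (𝓝 (v 0)) := by
      refine tendsto_const_nhds.congr fun m => ?_
      rw [hu]; ring
    exact tendsto_nhds_unique this hf
  | succ L ih =>
    intro u v hb
    by_cases hρL : ρ < 2^(L+1)
    · -- extract top coefficients
      set B : ℂ := (2:ℂ)^(L+1) with hB
      have hBm : ∀ m : ℕ, B^m ≠ 0 := fun m => pow_ne_zero _ (by rw [hB]; exact pow_ne_zero _ two_ne_zero)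
      set F : ℕ → ℂ := fun m => ∑ s ∈ range (L+2), (u s * m + v s) * ((2:ℂ)^s)^m with hF
      have hρB : ρ / 2^(L+1) < 1 := by
        rw [div_lt_one (by positivity)]
        exact hρL
      have hρB0 : 0 ≤ ρ / 2^(L+1) := by positivity
      have hg : Tendsto (fun m : ℕ => Cb * (ρ/2^(L+1))^m) atTop (𝓝 0) := by
        simpa using (tendsto_pow_atTop_nhds_zero_of_lt_one hρB0 hρB).const_mul Cb
      -- F/(m B^m) → 0
      have hF1 : Tendsto (fun m : ℕ => F m / ((m:ℂ) * B^m)) atTop (𝓝 0) := by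
        refine squeeze_zero_norm' ?_ hg
        filter_upwards [eventually_ge_atTop M0, eventually_ge_atTop 1] with m hm hm1
        have hm0 : (1:ℝ) ≤ (m:ℝ) := by exact_mod_cast hm1
        rw [norm_div, norm_mul, RCLike.norm_natCast, hB, norm_two_pow_pow]
        calc ‖F m‖ / ((m:ℝ) * ((2:ℝ)^(L+1))^m)
            ≤ (Cb * ρ^m) / (1 * ((2:ℝ)^(L+1))^m) := by
              refine div_le_div₀ ?_ (hb m hm) (by positivity) ?_
              · have h0 := norm_nonneg (F m)
                have h1 := hb m hm
                linarith
              · rw [one_mul]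
                nlinarith [pow_pos (show (0:ℝ) < 2^(L+1) by positivity) m]
          _ = Cb * (ρ/2^(L+1))^m := by
              rw [one_mul, div_pow]
              ring
      -- F/(m B^m) → u (L+1)
      have hF2 : Tendsto (fun m : ℕ => F m / ((m:ℂ) * B^m)) atTop (𝓝 (u (L+1))) := by
        have hsplit : ∀ m : ℕ, F m / ((m:ℂ) * B^m) =
            (∑ s ∈ range (L+1), (u s * m + v s) * ((2:ℂ)^s)^m / ((m:ℂ) * B^m))
            + (u (L+1) * m + v (L+1)) * B^m / ((m:ℂ) * B^m) := by
          intro m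
          rw [hF]
          simp only
          rw [Finset.sum_range_succ, add_div, Finset.sum_div]
        rw [show 𝓝 (u (L+1)) = 𝓝 ((0:ℂ) + u (L+1)) by rw [zero_add]]
        refine Tendsto.congr (fun m => (hsplit m).symm) (Tendsto.add ?_ ?_)
        · rw [show (0:ℂ) = ∑ s ∈ range (L+1), (0:ℂ) by simp]
          refine tendsto_finset_sum _ fun s hs => ?_
          rw [hB]
          exact term_lim' (u s) (v s) s (L+1) (mem_range.1 hs)
        · have heq : (fun m : ℕ => u (L+1) + v (L+1) * ((m:ℂ))⁻¹)
              =ᶠ[atTop] (fun m : ℕ => (u (L+1) * m + v (L+1)) * B^m / ((m:ℂ) * B^m)) := by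
            filter_upwards [eventually_ge_atTop 1] with m hm
            have hmne : ((m:ℂ)) ≠ 0 := by
              rw [Ne, Nat.cast_eq_zero]; omega
            rw [mul_comm ((m:ℂ)) (B^m)]
            rw [← div_div, mul_div_assoc, div_self (hBm m), mul_one, add_div,
              mul_div_assoc, div_self hmne, mul_one, div_eq_mul_inv]
          refine Tendsto.congr' heq ?_
          rw [show 𝓝 (u (L+1)) = 𝓝 (u (L+1) + 0) by rw [add_zero]]
          refine tendsto_const_nhds.add ?_
          refine squeeze_zero_norm' ?_ (tendsto_const_div_atTop_nhds_zero_nat ‖v (L+1)‖)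
          filter_upwards [eventually_ge_atTop 1] with m hm
          rw [norm_mul, norm_inv, RCLike.norm_natCast, div_eq_mul_inv]
      have huTop : u (L+1) = 0 := tendsto_nhds_unique hF2 hF1
      -- v (L+1)
      have hG1 : Tendsto (fun m : ℕ => F m / B^m) atTop (𝓝 0) := by
        refine squeeze_zero_norm' ?_ hg
        filter_upwards [eventually_ge_atTop M0] with m hm
        rw [norm_div, hB, norm_two_pow_pow]
        calc ‖F m‖ / ((2:ℝ)^(L+1))^m ≤ (Cb * ρ^m) / ((2:ℝ)^(L+1))^m := by
              gcongr
              exact hb m hm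
          _ = Cb * (ρ/2^(L+1))^m := by rw [div_pow]; ring
      have hG2 : Tendsto (fun m : ℕ => F m / B^m) atTop (𝓝 (v (L+1))) := by
        have hsplit : ∀ m : ℕ, F m / B^m =
            (∑ s ∈ range (L+1), (u s * m + v s) * ((2:ℂ)^s)^m / B^m)
            + (u (L+1) * m + v (L+1)) * B^m / B^m := by
          intro m
          rw [hF]
          simp only
          rw [Finset.sum_range_succ, add_div, Finset.sum_div]
        rw [show 𝓝 (v (L+1)) = 𝓝 ((0:ℂ) + v (L+1)) by rw [zero_add]]
        refine Tendsto.congr (fun m => (hsplit m).symm) (Tendsto.add ?_ ?_)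
        · rw [show (0:ℂ) = ∑ s ∈ range (L+1), (0:ℂ) by simp]
          refine tendsto_finset_sum _ fun s hs => ?_
          rw [hB]
          exact term_lim (u s) (v s) s (L+1) (mem_range.1 hs)
        · refine tendsto_const_nhds.congr fun m => ?_
          rw [mul_div_assoc, div_self (hBm m), mul_one, huTop, zero_mul, zero_add]
      have hvTop : v (L+1) = 0 := tendsto_nhds_unique hG2 hG1
      -- reduce to induction hypothesis
      have hb' : ∀ m : ℕ, M0 ≤ m → ‖∑ s ∈ range (L+1), (u s * m + v s) * ((2:ℂ)^s)^m‖ ≤ Cb * ρ^m := by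
        intro m hm
        have := hb m hm
        rw [Finset.sum_range_succ, huTop, hvTop] at this
        simpa using this
      intro s hs h2
      rcases Nat.lt_succ_iff_lt_or_eq.1 (Nat.lt_succ_of_le hs) with h | h
      · exact ih u v hb' s (Nat.lt_succ_iff.1 h) h2
      · rw [h]; exact ⟨huTop, hvTop⟩
    · intro s hs h2
      exfalso
      have h1 : (2:ℝ)^s ≤ 2^(L+1) := pow_le_pow_right₀ one_le_two hs
      push_neg at hρL
      linarith

noncomputable def cc (i k : ℕ) : ℂ := -((-(i:ℂ))^k / k)

noncomputable def Tr (K i m : ℕ) : ℝ := -∑ k ∈ range K, (-(i:ℝ)/2^m)^(k+1)/(k+1)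

noncomputable def uu (d K : ℕ) (a : ℕ → ℕ → ℂ) (s : ℕ) : ℂ :=
  if K ≤ s then (Real.log 2 : ℂ) * (∑ i ∈ range (d+1), a i (s-K)) else 0

noncomputable def vv (d D K : ℕ) (a : ℕ → ℕ → ℂ) (s : ℕ) : ℂ :=
  ∑ i ∈ range (d+1), ∑ j ∈ range (D+1),
    if j ≤ s ∧ s + 1 ≤ j + K then a i j * cc i (j + K - s) else 0

lemma pow_split (u v m : ℕ) : ((2:ℂ)^(u+v))^m = ((2:ℂ)^u)^m * ((2:ℂ)^v)^m := by
  rw [pow_add, mul_pow]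

lemma TrC (K i m : ℕ) :
    ((Tr K i m : ℝ) : ℂ) = ∑ k ∈ range K, cc i (k+1) * (((2:ℂ)^(k+1))^m)⁻¹ := by
  unfold Tr cc
  push_cast
  rw [neg_eq_iff_eq_neg, ← Finset.sum_neg_distrib]
  refine Finset.sum_congr rfl fun k _ => ?_
  rw [div_pow, pow_right_comm]
  ring

lemma u_part (d D K : ℕ) (a : ℕ → ℕ → ℂ) (q : ℕ → Polynomial ℂ)
    (heval : ∀ i ∈ range (d+1), ∀ x : ℂ, (q i).eval x = ∑ j ∈ range (D+1), a i j * x^j)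
    (m : ℕ) :
    ∑ s ∈ range (D+K+1), uu d K a s * m * ((2:ℂ)^s)^m
      = ((2:ℂ)^K)^m * ((∑ i ∈ range (d+1), (q i).eval ((2:ℂ)^m)) * ((m:ℂ) * (Real.log 2 : ℂ))) := by
  have h1 : ∀ s ∈ range (D+K+1), uu d K a s * m * ((2:ℂ)^s)^m =
      if K ≤ s then ((Real.log 2 : ℂ) * (∑ i ∈ range (d+1), a i (s-K))) * m * ((2:ℂ)^s)^m else 0 := by
    intro s _
    unfold uu
    split <;> simp
  rw [Finset.sum_congr rfl h1, ← Finset.sum_filter]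
  have hfil : (range (D+K+1)).filter (fun s => K ≤ s) = Ico K (D+K+1) := by
    ext s
    simp only [mem_filter, mem_range, mem_Ico]
    omega
  rw [hfil, Finset.sum_Ico_eq_sum_range]
  have hDK : D + K + 1 - K = D + 1 := by omega
  rw [hDK]
  have h2 : ∀ i ∈ range (d+1), (q i).eval ((2:ℂ)^m) = ∑ j ∈ range (D+1), a i j * ((2:ℂ)^m)^j :=
    fun i hi => heval i hi _
  rw [Finset.sum_congr rfl h2, Finset.sum_comm, Finset.sum_mul, Finset.mul_sum]
  refine Finset.sum_congr rfl fun j _ => ?_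
  have hj : K + j - K = j := by omega
  rw [hj, ← Finset.sum_mul, show K + j = j + K by omega, pow_split, pow_right_comm]
  ring

lemma v_part (d D K : ℕ) (a : ℕ → ℕ → ℂ) (q : ℕ → Polynomial ℂ)
    (heval : ∀ i ∈ range (d+1), ∀ x : ℂ, (q i).eval x = ∑ j ∈ range (D+1), a i j * x^j)
    (m : ℕ) :
    ∑ s ∈ range (D+K+1), vv d D K a s * ((2:ℂ)^s)^m
      = ((2:ℂ)^K)^m * ∑ i ∈ range (d+1), (q i).eval ((2:ℂ)^m) * ((Tr K i m : ℝ) : ℂ) := by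
  have hstep : ∀ s ∈ range (D+K+1), vv d D K a s * ((2:ℂ)^s)^m
      = ∑ i ∈ range (d+1), ∑ j ∈ range (D+1),
          (if j ≤ s ∧ s + 1 ≤ j + K then a i j * cc i (j + K - s) * ((2:ℂ)^s)^m else 0) := by
    intro s _
    unfold vv
    rw [Finset.sum_mul]
    refine Finset.sum_congr rfl fun i _ => ?_
    rw [Finset.sum_mul]
    refine Finset.sum_congr rfl fun j _ => ?_
    rw [ite_mul, zero_mul]
  rw [Finset.sum_congr rfl hstep]
  rw [Finset.sum_comm]
  rw [Finset.mul_sum]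
  refine Finset.sum_congr rfl fun i _ => ?_
  rw [Finset.sum_comm]
  rw [heval i (by assumption), TrC, Finset.sum_mul_sum, Finset.mul_sum]
  refine Finset.sum_congr rfl fun j hj => ?_
  have hjD : j ≤ D := by
    rw [mem_range] at hj; omega
  -- inner sum over s
  have hfil : (range (D+K+1)).filter (fun s => j ≤ s ∧ s + 1 ≤ j + K) = Ico j (j+K) := by
    ext s
    simp only [mem_filter, mem_range, mem_Ico]
    omega
  rw [← Finset.sum_filter, hfil, Finset.sum_Ico_eq_sum_range]
  have hKK : j + K - j = K := by omega
  rw [hKK]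
  have hrefl := Finset.sum_range_reflect
    (fun t => a i j * cc i (j + K - (j + t)) * ((2:ℂ)^(j+t))^m) K
  rw [← hrefl]
  rw [Finset.mul_sum]
  refine Finset.sum_congr rfl fun k hk => ?_
  have hkK : k < K := mem_range.1 hk
  have h1 : j + K - (j + (K - 1 - k)) = k + 1 := by omega
  rw [h1]
  have hQ : ((2:ℂ)^(k+1))^m ≠ 0 := pow_ne_zero _ (pow_ne_zero _ two_ne_zero)
  have hP : ((2:ℂ)^(j+(K-1-k)))^m = (((2:ℂ)^K)^m * ((2:ℂ)^m)^j) * (((2:ℂ)^(k+1))^m)⁻¹ := by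
    rw [eq_mul_inv_iff_mul_eq₀ hQ, ← mul_pow, ← pow_add,
      show j + (K-1-k) + (k+1) = K + j by omega, pow_split, pow_right_comm 2 K m, pow_right_comm 2 j m]
  rw [hP]
  ring

lemma err_bound (d K i m : ℕ) (hi : i ≤ d) (hm : 2*d ≤ 2^m) :
    |Real.log (1 + (i:ℝ)/2^m) - Tr K i m| ≤ 2 * ((d:ℝ)/2^m)^(K+1) := by
  set x : ℝ := -(i:ℝ)/2^m with hx
  have hxabs : |x| = (i:ℝ)/2^m := by
    rw [hx, abs_div, abs_neg, abs_of_nonneg (by positivity : (0:ℝ) ≤ (i:ℝ)),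
      abs_of_nonneg (by positivity : (0:ℝ) ≤ (2:ℝ)^m)]
  have hd2 : (d:ℝ)/2^m ≤ 1/2 := by
    rw [div_le_div_iff₀ (by positivity) (by norm_num)]
    have : (2*d : ℝ) ≤ 2^m := by exact_mod_cast hm
    push_cast
    linarith
  have hxd : |x| ≤ (d:ℝ)/2^m := by
    rw [hxabs]
    gcongr
  have hx1 : |x| < 1 := lt_of_le_of_lt (hxd.trans hd2) (by norm_num)
  have hmain := Real.abs_log_sub_add_sum_range_le hx1 K
  have h1mx : 1 - x = 1 + (i:ℝ)/2^m := by rw [hx]; ring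
  have hTr : (∑ k ∈ range K, x^(k+1)/(k+1)) = -Tr K i m := by
    rw [Tr, hx]; push_cast; ring
  rw [h1mx, hTr] at hmain
  have h2 : |Real.log (1 + (i:ℝ)/2^m) - Tr K i m| = |(-Tr K i m) + Real.log (1 + (i:ℝ)/2^m)| := by
    rw [show (-Tr K i m) + Real.log (1 + (i:ℝ)/2^m) = Real.log (1 + (i:ℝ)/2^m) - Tr K i m by ring]
  rw [h2]
  refine hmain.trans ?_
  have hden : (1:ℝ)/2 ≤ 1 - |x| := by
    have := hxd.trans hd2
    linarith
  calc |x|^(K+1) / (1 - |x|) ≤ ((d:ℝ)/2^m)^(K+1) / (1/2) := by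
        refine div_le_div₀ (by positivity) (pow_le_pow_left₀ (abs_nonneg x) hxd _) (by norm_num) hden
    _ = 2 * ((d:ℝ)/2^m)^(K+1) := by ring

lemma rel_to_bound (d D K : ℕ) (a : ℕ → ℕ → ℂ) (q : ℕ → Polynomial ℂ)
    (heval : ∀ i ∈ range (d+1), ∀ x : ℂ, (q i).eval x = ∑ j ∈ range (D+1), a i j * x^j)
    (hrelm : ∀ m : ℕ, d+1 ≤ m →
      (∑ i ∈ range (d+1), (q i).eval ((2:ℂ)^m) * ((Real.log ((2:ℝ)^m + (i:ℝ))) : ℂ)) = 0) :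
    ∀ m : ℕ, d+1 ≤ m →
      ‖∑ s ∈ range (D+K+1), (uu d K a s * m + vv d D K a s) * ((2:ℂ)^s)^m‖
        ≤ (2*((d:ℝ)+1)*(∑ i ∈ range (d+1), ∑ j ∈ range (D+1), ‖a i j‖)*(d:ℝ)^(K+1)) * ((2:ℝ)^D/2)^m := by
  intro m hm
  have h2d : 2*d ≤ 2^m := by
    have h1 : d < 2^d := Nat.lt_two_pow_self (n := d)
    have h2 : 2^(d+1) ≤ 2^m := Nat.pow_le_pow_right (by norm_num) hm
    have h3 : 2^(d+1) = 2*2^d := by rw [pow_succ]; ring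
    omega
  set x : ℂ := (2:ℂ)^m with hxdef
  set ℓ : ℕ → ℝ := fun i => Real.log (1 + (i:ℝ)/2^m) with hℓ
  -- split the logarithm
  have hlogsplit : ∀ i : ℕ, Real.log ((2:ℝ)^m + (i:ℝ)) = m * Real.log 2 + ℓ i := by
    intro i
    have hpos : (0:ℝ) < 1 + (i:ℝ)/2^m := by positivity
    have heq : (2:ℝ)^m + (i:ℝ) = 2^m * (1 + (i:ℝ)/2^m) := by
      field_simp
    rw [heq, Real.log_mul (by positivity) (ne_of_gt hpos), Real.log_pow, hℓ]
  have hrel0 : ∑ i ∈ range (d+1), (q i).eval x * ((m:ℂ) * (Real.log 2 : ℂ) + ((ℓ i : ℝ):ℂ)) = 0 := by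
    rw [← hrelm m hm]
    refine Finset.sum_congr rfl fun i _ => ?_
    rw [hlogsplit i]
    push_cast
    ring
  -- main identity
  have hmain : ∑ s ∈ range (D+K+1), (uu d K a s * m + vv d D K a s) * ((2:ℂ)^s)^m
      = -(((2:ℂ)^K)^m * ∑ i ∈ range (d+1), (q i).eval x * (((ℓ i - Tr K i m : ℝ)):ℂ)) := by
    calc ∑ s ∈ range (D+K+1), (uu d K a s * m + vv d D K a s) * ((2:ℂ)^s)^m
        = ∑ s ∈ range (D+K+1), (uu d K a s * m * ((2:ℂ)^s)^m + vv d D K a s * ((2:ℂ)^s)^m) := by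
          refine Finset.sum_congr rfl fun s _ => by ring
      _ = ((2:ℂ)^K)^m * ((∑ i ∈ range (d+1), (q i).eval x) * ((m:ℂ) * (Real.log 2 : ℂ)))
          + ((2:ℂ)^K)^m * ∑ i ∈ range (d+1), (q i).eval x * ((Tr K i m : ℝ) : ℂ) := by
          rw [Finset.sum_add_distrib, u_part d D K a q heval m, v_part d D K a q heval m]
      _ = ((2:ℂ)^K)^m * (∑ i ∈ range (d+1), (q i).eval x * ((m:ℂ) * (Real.log 2 : ℂ) + ((ℓ i : ℝ):ℂ)))
          - ((2:ℂ)^K)^m * ∑ i ∈ range (d+1), (q i).eval x * (((ℓ i - Tr K i m : ℝ)):ℂ) := by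
          rw [← mul_add, ← mul_sub]
          congr 1
          rw [Finset.sum_mul, ← Finset.sum_add_distrib, ← Finset.sum_sub_distrib]
          refine Finset.sum_congr rfl fun i _ => ?_
          push_cast
          ring
      _ = -(((2:ℂ)^K)^m * ∑ i ∈ range (d+1), (q i).eval x * (((ℓ i - Tr K i m : ℝ)):ℂ)) := by
          rw [hrel0]
          ring
  rw [hmain, norm_neg, norm_mul, norm_two_pow_pow]
  -- bound the sum
  set Na : ℝ := ∑ i ∈ range (d+1), ∑ j ∈ range (D+1), ‖a i j‖ with hNa
  have hNa0 : 0 ≤ Na := Finset.sum_nonneg fun i _ => Finset.sum_nonneg fun j _ => norm_nonneg _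
  have hev : ∀ i ∈ range (d+1), ‖(q i).eval x‖ ≤ Na * ((2:ℝ)^D)^m := by
    intro i hi
    rw [heval i hi x]
    refine (norm_sum_le _ _).trans ?_
    have hterm : ∀ j ∈ range (D+1), ‖a i j * x^j‖ ≤ ‖a i j‖ * ((2:ℝ)^D)^m := by
      intro j hj
      rw [norm_mul, hxdef, norm_two_pow_pow]
      refine mul_le_mul_of_nonneg_left ?_ (norm_nonneg _)
      rw [← pow_mul, ← pow_mul]
      have hj' : j ≤ D := by rw [mem_range] at hj; omega
      exact pow_le_pow_right₀ one_le_two (by rw [mul_comm D m]; exact Nat.mul_le_mul_left m hj')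
    refine (Finset.sum_le_sum hterm).trans ?_
    rw [← Finset.sum_mul]
    refine mul_le_mul_of_nonneg_right ?_ (by positivity)
    rw [hNa]
    refine Finset.single_le_sum (f := fun i => ∑ j ∈ range (D+1), ‖a i j‖)
      (fun i _ => Finset.sum_nonneg fun j _ => norm_nonneg _) hi
  have herr : ∀ i ∈ range (d+1), ‖(((ℓ i - Tr K i m : ℝ)):ℂ)‖ ≤ 2 * ((d:ℝ)/2^m)^(K+1) := by
    intro i hi
    rw [Complex.norm_real]
    have : i ≤ d := by rw [mem_range] at hi; omega
    exact err_bound d K i m this h2d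
  have hsum : ‖∑ i ∈ range (d+1), (q i).eval x * (((ℓ i - Tr K i m : ℝ)):ℂ)‖
      ≤ ((d:ℝ)+1) * (Na * ((2:ℝ)^D)^m * (2 * ((d:ℝ)/2^m)^(K+1))) := by
    refine (norm_sum_le _ _).trans ?_
    have : ∀ i ∈ range (d+1), ‖(q i).eval x * (((ℓ i - Tr K i m : ℝ)):ℂ)‖
        ≤ Na * ((2:ℝ)^D)^m * (2 * ((d:ℝ)/2^m)^(K+1)) := by
      intro i hi
      rw [norm_mul]
      exact mul_le_mul (hev i hi) (herr i hi) (norm_nonneg _) (by positivity)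
    refine (Finset.sum_le_sum this).trans ?_
    rw [Finset.sum_const, card_range, nsmul_eq_mul]
    push_cast
    ring_nf
    exact le_rfl
  calc ((2:ℝ)^K)^m * ‖∑ i ∈ range (d+1), (q i).eval x * (((ℓ i - Tr K i m : ℝ)):ℂ)‖
      ≤ ((2:ℝ)^K)^m * (((d:ℝ)+1) * (Na * ((2:ℝ)^D)^m * (2 * ((d:ℝ)/2^m)^(K+1)))) := by
        exact mul_le_mul_of_nonneg_left hsum (by positivity)
    _ = (2*((d:ℝ)+1)*Na*(d:ℝ)^(K+1)) * ((2:ℝ)^D/2)^m := by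
        have hA : ((2:ℝ)^m) ≠ 0 := by positivity
        rw [div_pow, div_pow, pow_right_comm 2 K m, pow_right_comm 2 D m]
        field_simp
        ring

lemma cascade (d D : ℕ) (a : ℕ → ℕ → ℂ)
    (hC : ∀ m : ℕ, 1 ≤ m → ∑ i ∈ range (d+1), ∑ j ∈ range (D+1), a i j * cc i (j+m) = 0) :
    ∀ i, 1 ≤ i → i ≤ d → ∀ j, j ≤ D → a i j = 0 := by
  set NB : ℝ := ∑ i ∈ range (d+1), ∑ j ∈ range (D+1), ‖a i j‖ * (d:ℝ)^j with hNB
  have hNB0 : 0 ≤ NB :=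
    Finset.sum_nonneg fun i _ => Finset.sum_nonneg fun j _ => by positivity
  have hG : ∀ m : ℕ, 1 ≤ m → ∑ i ∈ range (d+1),
      ((-(i:ℂ))^m * ∑ j ∈ range (D+1), (a i j * (-(i:ℂ))^j) / ((m:ℂ)+j)) = 0 := by
    intro m hm
    have h0 := hC m hm
    have heq : ∑ i ∈ range (d+1), ∑ j ∈ range (D+1), a i j * cc i (j+m)
        = -∑ i ∈ range (d+1), ((-(i:ℂ))^m * ∑ j ∈ range (D+1), (a i j * (-(i:ℂ))^j) / ((m:ℂ)+j)) := by
      rw [← Finset.sum_neg_distrib]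
      refine Finset.sum_congr rfl fun i _ => ?_
      rw [Finset.mul_sum, ← Finset.sum_neg_distrib]
      refine Finset.sum_congr rfl fun j _ => ?_
      have hc : ((j+m:ℕ):ℂ) = (m:ℂ)+j := by push_cast; ring
      rw [cc, hc, pow_add]
      ring
    rw [heq] at h0
    exact neg_eq_zero.1 h0
  have hrow : ∀ i' ≤ d, ∀ m : ℕ, 1 ≤ m →
      ‖∑ j ∈ range (D+1), (a i' j * (-(i':ℂ))^j) / ((m:ℂ)+j)‖ ≤ NB := by
    intro i' hi' m hm
    refine (norm_sum_le _ _).trans ?_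
    have hterm : ∀ j ∈ range (D+1), ‖(a i' j * (-(i':ℂ))^j) / ((m:ℂ)+j)‖ ≤ ‖a i' j‖ * (d:ℝ)^j := by
      intro j hj
      rw [norm_div, norm_natCast_add, norm_mul, norm_pow, norm_neg, RCLike.norm_natCast]
      have hmj : (1:ℝ) ≤ (m:ℝ) + j := by
        have h1 : (1:ℝ) ≤ (m:ℝ) := by exact_mod_cast hm
        have h2 : (0:ℝ) ≤ (j:ℝ) := by positivity
        push_cast
        linarith
      calc ‖a i' j‖ * (i':ℝ)^j / ((m:ℝ)+j) ≤ ‖a i' j‖ * (i':ℝ)^j / 1 := by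
            refine div_le_div_of_nonneg_left ?_ ?_ ?_
            · positivity
            · norm_num
            · exact hmj
        _ = ‖a i' j‖ * (i':ℝ)^j := by ring
        _ ≤ ‖a i' j‖ * (d:ℝ)^j := by
            refine mul_le_mul_of_nonneg_left ?_ (norm_nonneg _)
            refine pow_le_pow_left₀ (by positivity) ?_ j
            exact_mod_cast hi'
    refine (Finset.sum_le_sum hterm).trans ?_
    rw [hNB]
    refine Finset.single_le_sum (f := fun i => ∑ j ∈ range (D+1), ‖a i j‖ * (d:ℝ)^j)
      (fun i _ => Finset.sum_nonneg fun j _ => by positivity) (mem_range.2 (by omega))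
  have step : ∀ i, 1 ≤ i → i ≤ d → (∀ i', i < i' → i' ≤ d → ∀ j, j ≤ D → a i' j = 0) →
      ∀ j, j ≤ D → a i j = 0 := by
    intro i h1 h2 hz
    have hipos : (0:ℝ) < (i:ℝ) := by exact_mod_cast h1
    have him1 : (0:ℝ) ≤ (i:ℝ) - 1 := by
      have : (1:ℝ) ≤ (i:ℝ) := by exact_mod_cast h1
      linarith
    set b : ℕ → ℂ := fun j => a i j * (-(i:ℂ))^j with hbdef
    have hbound : ∀ m : ℕ, 1 ≤ m →
        ‖∑ j ∈ range (D+1), b j / ((m:ℂ)+j)‖ ≤ (((d:ℝ)+1)*NB) * (((i:ℝ)-1)/i)^m := by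
      intro m hm
      have hG' := hG m hm
      rw [Finset.range_eq_Ico,
        ← Finset.sum_Ico_consecutive _ (Nat.zero_le (i+1)) (by omega : i+1 ≤ d+1),
        ← Finset.range_eq_Ico] at hG'
      have hhi : ∑ i' ∈ Ico (i+1) (d+1),
          ((-(i':ℂ))^m * ∑ j ∈ range (D+1), (a i' j * (-(i':ℂ))^j) / ((m:ℂ)+j)) = 0 := by
        refine Finset.sum_eq_zero fun i' hi' => ?_
        rw [mem_Ico] at hi'
        have hzz : ∑ j ∈ range (D+1), (a i' j * (-(i':ℂ))^j) / ((m:ℂ)+j) = 0 := by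
          refine Finset.sum_eq_zero fun j hj => ?_
          rw [hz i' (by omega) (by omega) j (by rw [mem_range] at hj; omega)]
          simp
        rw [hzz, mul_zero]
      rw [hhi, add_zero, Finset.sum_range_succ] at hG'
      have hkey : (-(i:ℂ))^m * ∑ j ∈ range (D+1), b j / ((m:ℂ)+j)
          = -∑ i' ∈ range i, ((-(i':ℂ))^m * ∑ j ∈ range (D+1), (a i' j * (-(i':ℂ))^j) / ((m:ℂ)+j)) := by
        rw [hbdef]
        linear_combination hG'
      have hsum : ‖∑ i' ∈ range i, ((-(i':ℂ))^m * ∑ j ∈ range (D+1), (a i' j * (-(i':ℂ))^j) / ((m:ℂ)+j))‖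
          ≤ (i:ℝ) * (((i:ℝ)-1)^m * NB) := by
        refine (norm_sum_le _ _).trans ?_
        have per : ∀ i' ∈ range i,
            ‖((-(i':ℂ))^m * ∑ j ∈ range (D+1), (a i' j * (-(i':ℂ))^j) / ((m:ℂ)+j))‖
              ≤ ((i:ℝ)-1)^m * NB := by
          intro i' hi'
          rw [mem_range] at hi'
          rw [norm_mul, norm_pow, norm_neg, RCLike.norm_natCast]
          refine mul_le_mul ?_ (hrow i' (by omega) m hm) (norm_nonneg _) (pow_nonneg him1 m)
          refine pow_le_pow_left₀ (by positivity) ?_ m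
          have : (i':ℝ) + 1 ≤ (i:ℝ) := by exact_mod_cast hi'
          linarith
        refine (Finset.sum_le_sum per).trans ?_
        rw [Finset.sum_const, card_range, nsmul_eq_mul]
      have hnorm : (i:ℝ)^m * ‖∑ j ∈ range (D+1), b j / ((m:ℂ)+j)‖
          ≤ ((d:ℝ)+1) * (((i:ℝ)-1)^m * NB) := by
        have e1 : (i:ℝ)^m * ‖∑ j ∈ range (D+1), b j / ((m:ℂ)+j)‖
            = ‖(-(i:ℂ))^m * ∑ j ∈ range (D+1), b j / ((m:ℂ)+j)‖ := by
          rw [norm_mul, norm_pow, norm_neg, RCLike.norm_natCast]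
        rw [e1, hkey, norm_neg]
        refine hsum.trans ?_
        have hid : (i:ℝ) ≤ (d:ℝ)+1 := by
          have : (i:ℝ) ≤ (d:ℝ) := by exact_mod_cast h2
          linarith
        refine mul_le_mul_of_nonneg_right hid (mul_nonneg (pow_nonneg him1 m) hNB0)
      have hfin : ‖∑ j ∈ range (D+1), b j / ((m:ℂ)+j)‖
          ≤ (((d:ℝ)+1) * (((i:ℝ)-1)^m * NB)) / (i:ℝ)^m := by
        rw [le_div_iff₀ (by positivity)]
        calc ‖∑ j ∈ range (D+1), b j / ((m:ℂ)+j)‖ * (i:ℝ)^m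
            = (i:ℝ)^m * ‖∑ j ∈ range (D+1), b j / ((m:ℂ)+j)‖ := by ring
          _ ≤ ((d:ℝ)+1) * (((i:ℝ)-1)^m * NB) := hnorm
      refine hfin.trans (le_of_eq ?_)
      rw [div_pow]
      field_simp
    have hr0 : 0 ≤ ((i:ℝ)-1)/i := by
      have : (1:ℝ) ≤ (i:ℝ) := by exact_mod_cast h1
      exact div_nonneg (by linarith) (le_of_lt hipos)
    have hr1 : ((i:ℝ)-1)/i < 1 := by
      rw [div_lt_one hipos]
      linarith
    have hmom := mom D b _ _ hr0 hr1 hbound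
    intro j hj
    have hbj := hmom j hj
    have hz2 : (-(i:ℂ))^j ≠ 0 := pow_ne_zero _ (neg_ne_zero.2 (Nat.cast_ne_zero.2 (by omega)))
    rcases mul_eq_zero.1 hbj with h' | h'
    · exact h'
    · exact absurd h' hz2
  have main : ∀ t, ∀ i, 1 ≤ i → i ≤ d → d ≤ i + t → ∀ j, j ≤ D → a i j = 0 := by
    intro t
    induction t with
    | zero =>
      intro i h1 h2 h3
      exact step i h1 h2 (fun i' hlt hle => by omega)
    | succ t ih =>
      intro i h1 h2 h3
      exact step i h1 h2 (fun i' hlt hle j hj => ih i' (by omega) hle (by omega) j hj)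
  exact fun i h1 h2 => main d i h1 h2 (by omega)

theorem log_not_holonomic_complex :
    ¬ ∃ (d : ℕ) (p : Fin (d + 1) → Polynomial ℂ),
      (∃ i, p i ≠ 0) ∧
      ∀ n : ℕ, 1 ≤ n →
        (∑ i : Fin (d + 1), (p i).eval (n : ℂ) * (Real.log (n + i) : ℂ)) = 0 := by
  rintro ⟨d, p, ⟨i0, hi0⟩, hrel⟩
  classical
  set q : ℕ → Polynomial ℂ := fun i => if h : i < d+1 then p ⟨i, h⟩ else 0 with hq
  set D : ℕ := (range (d+1)).sup (fun i => (q i).natDegree) with hD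
  set a : ℕ → ℕ → ℂ := fun i j => (q i).coeff j with ha
  have heval : ∀ i ∈ range (d+1), ∀ x : ℂ, (q i).eval x = ∑ j ∈ range (D+1), a i j * x^j := by
    intro i hi x
    exact (q i).eval_eq_sum_range' (Nat.lt_succ_of_le (Finset.le_sup (f := fun i => (q i).natDegree) hi)) x
  have hqp : ∀ i : Fin (d+1), q (i:ℕ) = p i := by
    intro i
    rw [hq]
    simp [i.isLt]
  have hrelm : ∀ m : ℕ, d+1 ≤ m →
      (∑ i ∈ range (d+1), (q i).eval ((2:ℂ)^m) * ((Real.log ((2:ℝ)^m + (i:ℝ))) : ℂ)) = 0 := by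
    intro m hm
    have h1 := hrel (2^m) Nat.one_le_two_pow
    calc ∑ i ∈ range (d+1), (q i).eval ((2:ℂ)^m) * ((Real.log ((2:ℝ)^m + (i:ℝ))) : ℂ)
        = ∑ i : Fin (d+1), (q (i:ℕ)).eval ((2:ℂ)^m) * ((Real.log ((2:ℝ)^m + ((i:ℕ):ℝ))) : ℂ) :=
          (Fin.sum_univ_eq_sum_range
            (fun i => (q i).eval ((2:ℂ)^m) * ((Real.log ((2:ℝ)^m + (i:ℝ))) : ℂ)) (d+1)).symm
      _ = ∑ i : Fin (d+1), (p i).eval (((2^m : ℕ)):ℂ) * ((Real.log (((2^m : ℕ):ℝ) + ((i:ℕ):ℝ))) : ℂ) := by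
          refine Finset.sum_congr rfl fun i _ => ?_
          rw [hqp i]
          norm_num
      _ = 0 := h1
  -- the master extraction
  have hexp : ∀ K s : ℕ, s ≤ D+K → (2:ℝ)^D/2 < 2^s → uu d K a s = 0 ∧ vv d D K a s = 0 := by
    intro K s hs h2s
    exact expz (d+1)
      (2*((d:ℝ)+1)*(∑ i ∈ range (d+1), ∑ j ∈ range (D+1), ‖a i j‖)*(d:ℝ)^(K+1))
      ((2:ℝ)^D/2) (by positivity) (D+K) (uu d K a) (vv d D K a)
      (rel_to_bound d D K a q heval hrelm) s hs h2s
  have hρs : ∀ s : ℕ, D ≤ s → (2:ℝ)^D/2 < 2^s := by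
    intro s hs
    have h0 : (2:ℝ)^D/2 < 2^D := by
      have : (0:ℝ) < 2^D := by positivity
      linarith
    exact lt_of_lt_of_le h0 (pow_le_pow_right₀ one_le_two hs)
  -- column sums vanish
  have hA : ∀ j, j ≤ D → ∑ i ∈ range (d+1), a i j = 0 := by
    intro j hj
    have h := (hexp (D+1) (j+(D+1)) (by omega) (hρs _ (by omega))).1
    rw [uu, if_pos (by omega : D+1 ≤ j+(D+1))] at h
    rw [show j+(D+1)-(D+1) = j from by omega] at h
    rcases mul_eq_zero.1 h with h' | h'
    · exfalso
      have : Real.log 2 = 0 := by exact_mod_cast h'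
      exact (Real.log_pos one_lt_two).ne' this
    · exact h'
  -- the C-coefficients vanish
  have hC : ∀ m : ℕ, 1 ≤ m → ∑ i ∈ range (d+1), ∑ j ∈ range (D+1), a i j * cc i (j+m) = 0 := by
    intro m hm
    have h := (hexp (D+m) D (by omega) (hρs D le_rfl)).2
    rw [vv] at h
    rw [← h]
    refine Finset.sum_congr rfl fun i _ => Finset.sum_congr rfl fun j hj => ?_
    rw [mem_range] at hj
    rw [if_pos (by constructor <;> omega : j ≤ D ∧ D + 1 ≤ j + (D+m))]
    rw [show j+(D+m)-D = j+m from by omega]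
  -- conclude coefficients vanish
  have hzero1 : ∀ i, 1 ≤ i → i ≤ d → ∀ j, j ≤ D → a i j = 0 := cascade d D a hC
  have hzero0 : ∀ j, j ≤ D → a 0 j = 0 := by
    intro j hj
    have hAj := hA j hj
    rw [Finset.sum_range_succ'] at hAj
    have : ∑ i ∈ range d, a (i+1) j = 0 :=
      Finset.sum_eq_zero fun i hi => hzero1 (i+1) (by omega) (by rw [mem_range] at hi; omega) j hj
    rw [this, zero_add] at hAj
    exact hAj
  have hzeroall : ∀ i, i ≤ d → ∀ j, j ≤ D → a i j = 0 := by
    intro i hi j hj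
    rcases Nat.eq_zero_or_pos i with h | h
    · rw [h]; exact hzero0 j hj
    · exact hzero1 i h hi j hj
  have hq0 : ∀ i, i ≤ d → q i = 0 := by
    intro i hi
    ext j
    rw [Polynomial.coeff_zero]
    by_cases hj : j ≤ D
    · exact hzeroall i hi j hj
    · refine Polynomial.coeff_eq_zero_of_natDegree_lt ?_
      have : (q i).natDegree ≤ D := Finset.le_sup (f := fun i => (q i).natDegree) (mem_range.2 (by omega))
      omega
  refine hi0 ?_
  rw [← hqp i0]
  exact hq0 (i0:ℕ) (by omega)
end

section
/- Let d ≥ 1, let b_0 = 0 < b_1 < ... < b_d be real numbers, and let p_0, p_1, ..., p_d be real polynomials, not all of them zero. Then the function F(x) = Σ_{i=0}^d p_i(x)·log(x + b_i) is not identically zero on (0, ∞); that is, there exists x > 0 with F(x) ≠ 0. -/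
open Polynomial Finset

namespace LogAux

variable {d : ℕ}

noncomputable def PP (b : Fin (d + 1) → ℝ) : Polynomial ℝ := ∏ j, (X + C (b j))

noncomputable def PE (b : Fin (d + 1) → ℝ) (i : Fin (d + 1)) : Polynomial ℝ :=
  ∏ j ∈ Finset.univ.erase i, (X + C (b j))

lemma PP_eq (b : Fin (d + 1) → ℝ) (i : Fin (d + 1)) :
    PP b = (X + C (b i)) * PE b i :=
  (Finset.mul_prod_erase _ _ (mem_univ i)).symm

lemma PP_pos {b : Fin (d + 1) → ℝ} (hb : ∀ j, 0 ≤ b j) {x : ℝ} (hx : 0 < x) :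
    0 < (PP b).eval x := by
  rw [PP, eval_prod]
  exact Finset.prod_pos fun j _ => by
    simp only [eval_add, eval_X, eval_C]
    exact add_pos_of_pos_of_nonneg hx (hb j)

lemma PE_pos {b : Fin (d + 1) → ℝ} (hb : ∀ j, 0 ≤ b j) (i : Fin (d + 1)) {x : ℝ} (hx : 0 < x) :
    0 < (PE b i).eval x := by
  rw [PE, eval_prod]
  exact Finset.prod_pos fun j _ => by
    simp only [eval_add, eval_X, eval_C]
    exact add_pos_of_pos_of_nonneg hx (hb j)

lemma PP_ne_zero (b : Fin (d + 1) → ℝ) : PP b ≠ 0 :=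
  (monic_prod_of_monic _ _ fun j _ => monic_X_add_C (b j)).ne_zero

lemma PE_eval_ne {b : Fin (d + 1) → ℝ} (hinj : Function.Injective b) (i : Fin (d + 1)) :
    (PE b i).eval (-(b i)) ≠ 0 := by
  rw [PE, eval_prod]
  refine Finset.prod_ne_zero_iff.2 fun j hj => ?_
  simp only [eval_add, eval_X, eval_C]
  have hne : b j ≠ b i := fun h => (Finset.mem_erase.1 hj).1 (hinj h)
  intro h; apply hne; linarith

lemma PP_eval_root (b : Fin (d + 1) → ℝ) (i : Fin (d + 1)) :
    (PP b).eval (-(b i)) = 0 := by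
  rw [PP_eq b i]; simp

lemma PP_deriv_eval (b : Fin (d + 1) → ℝ) (i : Fin (d + 1)) :
    (derivative (PP b)).eval (-(b i)) = (PE b i).eval (-(b i)) := by
  conv_lhs => rw [PP_eq b i]
  rw [derivative_mul]
  simp

lemma sum_eval {b : Fin (d + 1) → ℝ} (hinj : Function.Injective b)
    (c : Fin (d + 1) → ℝ) (i : Fin (d + 1)) :
    (∑ k, C (c k) * PE b k).eval (-(b i)) = c i * (PE b i).eval (-(b i)) := by
  rw [eval_finset_sum]
  rw [Finset.sum_eq_single_of_mem i (mem_univ i)]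
  · simp
  · intro k _ hki
    rw [eval_mul, eval_C]
    have hz : (PE b k).eval (-(b i)) = 0 := by
      rw [PE, eval_prod]
      refine Finset.prod_eq_zero (Finset.mem_erase.2 ⟨Ne.symm hki, mem_univ i⟩) ?_
      simp
    rw [hz, mul_zero]

lemma lemA {b : Fin (d + 1) → ℝ} (hinj : Function.Injective b) :
    ∀ (n : ℕ) (u : Polynomial ℝ) (c : Fin (d + 1) → ℝ),
      (PP b)^n * (∑ k, C (c k) * PE b k) + derivative u * PP b
        - C (n : ℝ) * u * derivative (PP b) = 0 → ∀ i, c i = 0 := by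
  intro n
  induction n with
  | zero =>
    intro u c h i
    have h2 := congrArg (eval (-(b i))) h
    simp only [eval_add, eval_sub, eval_mul, eval_pow, eval_zero, pow_zero, one_mul,
      Nat.cast_zero, map_zero, zero_mul, PP_eval_root, mul_zero, sub_zero, add_zero] at h2
    rw [sum_eval hinj] at h2
    exact (mul_eq_zero.1 h2).resolve_right (PE_eval_ne hinj i)
  | succ n ih =>
    intro u c h
    have hroot : ∀ i, u.eval (-(b i)) = 0 := by
      intro i
      have h2 := congrArg (eval (-(b i))) h
      simp only [eval_add, eval_sub, eval_mul, eval_pow, eval_zero, PP_eval_root,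
        mul_zero, zero_mul, PP_deriv_eval, eval_C, zero_add, zero_sub, neg_eq_zero,
        zero_pow (Nat.succ_ne_zero n)] at h2
      have hE := PE_eval_ne hinj i
      have hn : ((n + 1 : ℕ) : ℝ) ≠ 0 := by positivity
      rcases mul_eq_zero.1 h2 with h3 | h3
      · rcases mul_eq_zero.1 h3 with h4 | h4
        · exact absurd h4 hn
        · exact h4
      · exact absurd h3 hE
    have hdvd : PP b ∣ u := by
      have hinj' : Function.Injective (fun j : Fin (d + 1) => -(b j)) :=
        fun j k hjk => hinj (neg_injective hjk)
      have hpc := Polynomial.pairwise_coprime_X_sub_C hinj'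
      have hPPeq : PP b = ∏ j, (X - C (-(b j))) := by
        rw [PP]
        refine Finset.prod_congr rfl fun j _ => ?_
        rw [map_neg, sub_neg_eq_add]
      rw [hPPeq]
      refine Finset.prod_dvd_of_coprime (hpc.set_pairwise _) fun j _ => ?_
      refine dvd_iff_isRoot.2 ?_
      simpa [IsRoot] using hroot j
    obtain ⟨w, hw⟩ := hdvd
    intro i
    refine ih w c ?_ i
    have hPP := PP_ne_zero b
    have key : PP b * ((PP b)^n * (∑ k, C (c k) * PE b k) + derivative w * PP b
        - C (n : ℝ) * w * derivative (PP b)) = 0 := by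
      rw [hw, derivative_mul] at h
      have hcast : (((n + 1 : ℕ)) : ℝ) = (n : ℝ) + 1 := by push_cast; ring
      rw [hcast, map_add, map_one] at h
      linear_combination h
    exact (mul_eq_zero.1 key).resolve_left hPP

noncomputable def VV (b : Fin (d + 1) → ℝ) (p : Fin (d + 1) → Polynomial ℝ)
    (u : Polynomial ℝ) (n : ℕ) : Polynomial ℝ :=
  (PP b)^n * (∑ i, p i * PE b i) + derivative u * PP b - C (n : ℝ) * u * derivative (PP b)

lemma step {b : Fin (d + 1) → ℝ} (hb0 : ∀ j, 0 ≤ b j)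
    (p : Fin (d + 1) → Polynomial ℝ) (u : Polynomial ℝ) (n : ℕ)
    (H : ∀ x : ℝ, 0 < x →
      (∑ i, (p i).eval x * Real.log (x + b i)) + u.eval x / ((PP b).eval x)^n = 0) :
    ∀ x : ℝ, 0 < x →
      (∑ i, (derivative (p i)).eval x * Real.log (x + b i))
        + (VV b p u n).eval x / ((PP b).eval x)^(n+1) = 0 := by
  intro x hx
  have hxb : ∀ i : Fin (d+1), 0 < x + b i := fun i => add_pos_of_pos_of_nonneg hx (hb0 i)
  have hP : 0 < (PP b).eval x := PP_pos hb0 hx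
  have hlog : ∀ i : Fin (d+1), HasDerivAt (fun y => Real.log (y + b i)) ((x + b i)⁻¹) x := by
    intro i
    have h1 : HasDerivAt (fun y : ℝ => y + b i) 1 x := (hasDerivAt_id x).add_const _
    simpa [Function.comp_def] using (Real.hasDerivAt_log (hxb i).ne').comp x h1
  have hterm : ∀ i : Fin (d+1), HasDerivAt (fun y => (p i).eval y * Real.log (y + b i))
      ((derivative (p i)).eval x * Real.log (x + b i) + (p i).eval x * (x + b i)⁻¹) x :=
    fun i => ((p i).hasDerivAt x).mul (hlog i)
  have hsum : HasDerivAt (fun y => ∑ i, (p i).eval y * Real.log (y + b i))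
      (∑ i, ((derivative (p i)).eval x * Real.log (x + b i) + (p i).eval x * (x + b i)⁻¹)) x :=
    HasDerivAt.fun_sum fun i _ => hterm i
  have hden : HasDerivAt (fun y => ((PP b).eval y)^n)
      ((n : ℝ) * ((PP b).eval x)^(n-1) * (derivative (PP b)).eval x) x :=
    ((PP b).hasDerivAt x).pow n
  have herr : HasDerivAt (fun y => u.eval y / ((PP b).eval y)^n)
      (((derivative u).eval x * ((PP b).eval x)^n
        - u.eval x * ((n : ℝ) * ((PP b).eval x)^(n-1) * (derivative (PP b)).eval x))
        / (((PP b).eval x)^n)^2) x :=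
    (u.hasDerivAt x).div hden (pow_ne_zero n hP.ne')
  have hG := hsum.add herr
  have hzero : HasDerivAt (fun y => (∑ i, (p i).eval y * Real.log (y + b i))
      + u.eval y / ((PP b).eval y)^n) 0 x := by
    refine (hasDerivAt_const x (0:ℝ)).congr_of_eventuallyEq ?_
    filter_upwards [Ioi_mem_nhds hx] with y hy
    exact H y hy
  have hD := hG.unique hzero
  -- algebra: identify the derivative with the canonical form
  have hsplit : ∀ i : Fin (d+1), (p i).eval x * (x + b i)⁻¹
      = ((p i) * PE b i).eval x / (PP b).eval x := by
    intro i
    have hPi : (PP b).eval x = (x + b i) * (PE b i).eval x := by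
      rw [PP_eq b i]; simp [eval_mul]
    have hE := (PE_pos hb0 i hx).ne'
    rw [eval_mul, hPi, mul_div_mul_right _ _ hE, div_eq_mul_inv]
  have hsum2 : (∑ i : Fin (d+1), (p i).eval x * (x + b i)⁻¹)
      = (∑ i, p i * PE b i).eval x / (PP b).eval x := by
    rw [eval_finset_sum, Finset.sum_div]
    exact Finset.sum_congr rfl fun i _ => hsplit i
  have key : (VV b p u n).eval x / ((PP b).eval x)^(n+1)
      = (∑ i : Fin (d+1), (p i).eval x * (x + b i)⁻¹)
        + (((derivative u).eval x * ((PP b).eval x)^n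
          - u.eval x * ((n : ℝ) * ((PP b).eval x)^(n-1) * (derivative (PP b)).eval x))
          / (((PP b).eval x)^n)^2) := by
    rw [hsum2]
    set A := (∑ i, p i * PE b i).eval x
    set P := (PP b).eval x
    set P' := (derivative (PP b)).eval x
    set U := u.eval x
    set U' := (derivative u).eval x
    have hVe : (VV b p u n).eval x = P^n * A + U' * P - (n : ℝ) * U * P' := by
      simp [VV, eval_add, eval_sub, eval_mul, eval_pow, eval_C]
      rfl
    rw [hVe]
    rcases n with _ | m
    · simp only [pow_zero, Nat.cast_zero, zero_mul, mul_zero, sub_zero, one_mul,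
        one_pow, div_one, zero_add, pow_one]
      field_simp
    · have hm : (m + 1) - 1 = m := rfl
      rw [hm]
      field_simp
      ring
  rw [key]
  rw [Finset.sum_add_distrib] at hD
  linarith [hD]

lemma main {b : Fin (d + 1) → ℝ} (hb0 : ∀ j, 0 ≤ b j) (hinj : Function.Injective b) :
    ∀ (M : ℕ) (p : Fin (d+1) → Polynomial ℝ) (u : Polynomial ℝ) (n : ℕ),
      (∀ i, (p i).natDegree ≤ M) →
      (∀ x : ℝ, 0 < x →
        (∑ i, (p i).eval x * Real.log (x + b i)) + u.eval x / ((PP b).eval x)^n = 0) →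
      ∀ i, p i = 0 := by
  intro M
  induction M with
  | zero =>
    intro p u n hdeg H i
    have hc : ∀ k, p k = C ((p k).coeff 0) := fun k => eq_C_of_natDegree_le_zero (hdeg k)
    have H2 := step hb0 p u n H
    have H3 : ∀ x : ℝ, 0 < x → (VV b p u n).eval x = 0 := by
      intro x hx
      have h2 := H2 x hx
      have hz : ∀ k : Fin (d+1), (derivative (p k)).eval x = 0 := by
        intro k; rw [hc k]; simp
      simp only [hz, zero_mul, Finset.sum_const_zero, zero_add] at h2
      have hPne : ((PP b).eval x)^(n+1) ≠ 0 := pow_ne_zero _ (PP_pos hb0 hx).ne'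
      exact (div_eq_zero_iff.1 h2).resolve_right hPne
    have hV : VV b p u n = 0 := by
      refine Polynomial.eq_zero_of_infinite_isRoot _ ?_
      refine Set.Ioi_infinite (0:ℝ) |>.mono fun x hx => ?_
      exact H3 x hx
    have hsum_eq : (∑ k, p k * PE b k) = ∑ k, C ((p k).coeff 0) * PE b k :=
      Finset.sum_congr rfl fun k _ => by rw [← hc k]
    rw [VV, hsum_eq] at hV
    have hci := lemA hinj n u (fun k => (p k).coeff 0) hV i
    rw [hc i, hci, map_zero]
  | succ M ih =>
    intro p u n hdeg H i
    have H2 := step hb0 p u n H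
    have hdeg' : ∀ k, (derivative (p k)).natDegree ≤ M := by
      intro k
      have h1 := Polynomial.natDegree_derivative_le (p k)
      have h2 := hdeg k
      omega
    have hder0 : ∀ k, derivative (p k) = 0 :=
      ih (fun k => derivative (p k)) (VV b p u n) (n+1) hdeg' H2
    have hc : ∀ k, (p k).natDegree = 0 :=
      fun k => Polynomial.natDegree_eq_zero_of_derivative_eq_zero (hder0 k)
    exact ih p u n (fun k => (hc k).le.trans (Nat.zero_le M)) H i

end LogAux

theorem log_combination_not_identically_zero
    (d : ℕ) (hd : 1 ≤ d)
    (b : Fin (d + 1) → ℝ) (hb0 : b 0 = 0) (hb : StrictMono b)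
    (p : Fin (d + 1) → Polynomial ℝ) (hp : ∃ i, p i ≠ 0) :
    ∃ x : ℝ, 0 < x ∧
      (∑ i : Fin (d + 1), (p i).eval x * Real.log (x + b i)) ≠ 0 := by
  by_contra hcon
  push_neg at hcon
  have hb0' : ∀ j, 0 ≤ b j := fun j => hb0 ▸ hb.monotone (Fin.zero_le j)
  have hinj : Function.Injective b := hb.injective
  have H : ∀ x : ℝ, 0 < x →
      (∑ i, (p i).eval x * Real.log (x + b i))
        + (0 : Polynomial ℝ).eval x / ((LogAux.PP b).eval x)^0 = 0 := by
    intro x hx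
    simpa using hcon x hx
  obtain ⟨i, hi⟩ := hp
  exact hi (LogAux.main hb0' hinj (Finset.univ.sup fun k => (p k).natDegree) p 0 0
    (fun k => Finset.le_sup (f := fun k => (p k).natDegree) (Finset.mem_univ k)) H i)
end

section
/- There do not exist rational polynomials p_0, p_1, ..., p_d, not all zero, such that p_d(n)·log(n+d) + ... + p_1(n)·log(n+1) + p_0(n)·log n = 0 for every integer n ≥ 1. In other words, the sequence (log n)_{n ≥ 1} satisfies no nontrivial holonomic recurrence with rational polynomial coefficients. -/
open Finset

lemma padicValRat_finset_prod {p : ℕ} [Fact p.Prime] {ι : Type*} (s : Finset ι) (f : ι → ℚ)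
    (hf : ∀ i ∈ s, f i ≠ 0) :
    padicValRat p (∏ i ∈ s, f i) = ∑ i ∈ s, padicValRat p (f i) := by
  classical
  induction s using Finset.induction with
  | empty => simp [padicValRat.one]
  | @insert a s ha ih =>
    rw [Finset.prod_insert ha, Finset.sum_insert ha,
      padicValRat.mul (hf a (Finset.mem_insert_self a s))
        (Finset.prod_ne_zero_iff.2 fun i hi => hf i (Finset.mem_insert_of_mem hi)),
      ih fun i hi => hf i (Finset.mem_insert_of_mem hi)]

lemma padicValRat_zpow {p : ℕ} [Fact p.Prime] {q : ℚ} (hq : q ≠ 0) (a : ℤ) :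
    padicValRat p (q ^ a) = a * padicValRat p q := by
  cases a with
  | ofNat n => simpa using padicValRat.pow (p := p) hq (k := n)
  | negSucc n =>
    rw [zpow_negSucc, padicValRat.inv, padicValRat.pow q]
    simp [Int.negSucc_eq]
    ring

/-- Key lemma: if a rational linear combination of logs of positive naturals vanishes,
and a prime `q` divides exactly one of the naturals, namely `m i = q`, then `c i = 0`. -/
lemma key_lemma {k : ℕ} (c : Fin k → ℚ) (m : Fin k → ℕ) (hm : ∀ j, 1 ≤ m j)
    (hrel : (∑ j, (c j : ℝ) * Real.log (m j)) = 0)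
    (q : ℕ) (hq : q.Prime) (i : Fin k) (hqi : m i = q)
    (hne : ∀ j, j ≠ i → ¬ q ∣ m j) : c i = 0 := by
  classical
  haveI : Fact q.Prime := ⟨hq⟩
  set D : ℕ := ∏ j, (c j).den with hD
  have hDne : (D : ℚ) ≠ 0 := by
    simp only [hD]
    push_cast
    exact Finset.prod_ne_zero_iff.2 fun j _ => by
      exact_mod_cast (Nat.cast_ne_zero (R := ℚ)).2 (c j).den_nz
  set a : Fin k → ℤ := fun j => (c j).num * ∏ t ∈ Finset.univ.erase j, ((c t).den : ℤ) with ha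
  have haj : ∀ j, (a j : ℚ) = c j * D := by
    intro j
    have h1 : (D : ℚ) = (c j).den * ∏ t ∈ Finset.univ.erase j, ((c t).den : ℚ) := by
      rw [hD]
      push_cast
      exact (Finset.mul_prod_erase _ _ (Finset.mem_univ j)).symm
    rw [h1, ha]
    push_cast
    rw [← mul_assoc, Rat.mul_den_eq_num]
  -- the integer log relation
  have hlog : (∑ j, (a j : ℝ) * Real.log (m j)) = 0 := by
    have := congrArg (fun x : ℝ => (D : ℝ) * x) hrel
    simp only [mul_zero, Finset.mul_sum] at this
    rw [← this]
    refine Finset.sum_congr rfl fun j _ => ?_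
    have : ((a j : ℚ) : ℝ) = (c j : ℝ) * (D : ℝ) := by
      rw [haj j]; push_cast; ring
    push_cast at this ⊢
    rw [this]; ring
  -- exponentiate
  have hmpos : ∀ j, (0 : ℝ) < (m j : ℝ) := fun j => by
    exact_mod_cast Nat.lt_of_lt_of_le Nat.zero_lt_one (hm j)
  have hprodR : (∏ j, ((m j : ℝ)) ^ (a j)) = 1 := by
    have := congrArg Real.exp hlog
    rw [Real.exp_sum, Real.exp_zero] at this
    rw [← this]
    refine Finset.prod_congr rfl fun j _ => ?_
    rw [← Real.rpow_intCast ((m j : ℝ)) (a j), Real.rpow_def_of_pos (hmpos j)]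
    ring_nf
  have hprodQ : (∏ j, ((m j : ℚ)) ^ (a j)) = 1 := by
    have : ((∏ j, ((m j : ℚ)) ^ (a j) : ℚ) : ℝ) = 1 := by
      push_cast
      exact hprodR
    exact_mod_cast this
  -- apply padicValRat
  have hmQne : ∀ j : Fin k, ((m j : ℚ)) ^ (a j) ≠ 0 := fun j =>
    zpow_ne_zero _ (by exact_mod_cast (Nat.lt_of_lt_of_le Nat.zero_lt_one (hm j)).ne')
  have hval := congrArg (padicValRat q) hprodQ
  rw [padicValRat.one, padicValRat_finset_prod _ _ (fun j _ => hmQne j)] at hval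
  have hterm : ∀ j : Fin k, padicValRat q ((m j : ℚ) ^ (a j)) =
      a j * (padicValNat q (m j) : ℤ) := by
    intro j
    rw [padicValRat_zpow (by exact_mod_cast (Nat.lt_of_lt_of_le Nat.zero_lt_one (hm j)).ne'),
      padicValRat.of_nat]
  rw [Finset.sum_congr rfl fun j _ => hterm j] at hval
  have hsum : (∑ j, a j * (padicValNat q (m j) : ℤ)) = a i := by
    rw [Finset.sum_eq_single i]
    · rw [hqi, padicValNat.self hq.one_lt]; ring
    · intro j _ hj
      rw [padicValNat.eq_zero_of_not_dvd (hne j hj)]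
      ring
    · intro h; exact absurd (Finset.mem_univ i) h
  rw [hsum] at hval
  have : c i * D = 0 := by rw [← haj i]; exact_mod_cast hval
  rcases mul_eq_zero.1 this with h | h
  · exact h
  · exact absurd h hDne

theorem log_not_holonomic_rat :
    ¬ ∃ (d : ℕ) (p : Fin (d + 1) → Polynomial ℚ),
      (∃ i, p i ≠ 0) ∧
      ∀ n : ℕ, 1 ≤ n →
        (∑ i : Fin (d + 1),
          (((p i).eval (n : ℚ) : ℚ) : ℝ) * Real.log (n + i)) = 0 := by
  rintro ⟨d, p, ⟨i, hi⟩, hrel⟩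
  apply hi
  apply Polynomial.eq_zero_of_infinite_isRoot
  have hroot : ∀ q : ℕ, q.Prime → d < q →
      Polynomial.IsRoot (p i) (((q - i.val : ℕ) : ℚ)) := by
    intro q hq hdq
    have hile : i.val ≤ d := Fin.is_le i
    have hiq : i.val < q := lt_of_le_of_lt hile hdq
    obtain ⟨n, hni⟩ : ∃ n, n + i.val = q ∧ n = q - i.val := ⟨q - i.val, by omega, rfl⟩
    obtain ⟨hni, hnval⟩ := hni
    have hn1 : 1 ≤ n := by omega
    rw [← hnval]
    have hrel' : (∑ j : Fin (d + 1),
        (((p j).eval (n : ℚ) : ℚ) : ℝ) * Real.log ((n + j.val : ℕ) : ℝ)) = 0 := by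
      rw [← hrel n hn1]
      refine Finset.sum_congr rfl fun j _ => ?_
      push_cast
      ring_nf
    have := key_lemma (fun j => (p j).eval (n : ℚ)) (fun j => n + j.val)
      (fun j => hn1.trans (Nat.le_add_right _ _)) hrel' q hq i (by simpa using hni) ?_
    · exact this
    · intro j hj hdvd
      have hdvd' : q ∣ n + j.val := hdvd
      clear hdvd
      have hjle : j.val ≤ d := Fin.is_le j
      -- n + j is in (0, 2q) and ≠ q, so not divisible by q
      have h1 : 0 < n + j.val := by omega
      have h2 : n + j.val < 2 * q := by omega
      have h3 : n + j.val ≠ q := by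
        intro hcon
        apply hj
        have : j.val = i.val := by omega
        exact Fin.ext this
      obtain ⟨t, ht⟩ := hdvd'
      have hq0 : 0 < q := hq.pos
      have ht0 : 0 < t := by rcases Nat.eq_zero_or_pos t with rfl | h; · omega
                             · exact h
      have h5 : q * t < q * 2 := by linarith
      have ht2 : t < 2 := Nat.lt_of_mul_lt_mul_left h5
      have : t = 1 := by omega
      subst this
      omega
  -- infinitely many roots
  have hinf : {x : ℚ | Polynomial.IsRoot (p i) x}.Infinite := by
    apply Set.Infinite.mono (s := (fun q : ℕ => ((q - i.val : ℕ) : ℚ)) ''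
      {q : ℕ | q.Prime ∧ d < q})
    · rintro x ⟨q, ⟨hq, hdq⟩, rfl⟩
      exact hroot q hq hdq
    · apply Set.Infinite.image
      · intro q₁ hq₁ q₂ hq₂ h
        simp only [Nat.cast_inj] at h
        have : i.val ≤ d := Fin.is_le i
        simp only [Set.mem_setOf_eq] at hq₁ hq₂
        omega
      · have : {q : ℕ | q.Prime ∧ d < q} = {q : ℕ | q.Prime} \ {q : ℕ | q ≤ d} := by
          ext q; simp [Set.mem_setOf_eq, not_le]
        rw [this]
        exact Set.Infinite.diff Nat.infinite_setOf_prime (Set.finite_le_nat d)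
  exact hinf
end

section
/- Let d ≥ 0, let I and J be disjoint subsets of {0, 1, ..., d}, not both empty, and for each i ∈ I ∪ J let q_i be a nonzero integer polynomial with positive leading coefficient. Then it is not the case that for all sufficiently large integers n one has ∏_{i∈I} (n+i)^{q_i(n)} = ∏_{j∈J} (n+j)^{q_j(n)}; i.e., there exist arbitrarily large integers n (with all exponents q_i(n) positive) for which the two products are unequal. -/
open Polynomial Filter

private lemma eval_eventually_pos (p : Polynomial ℤ) (hp : p ≠ 0)
    (hl : 0 < p.leadingCoeff) :
    ∃ M : ℕ, ∀ n : ℕ, M ≤ n → 0 < p.eval (n : ℤ) := by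
  by_cases hd : p.natDegree = 0
  · obtain ⟨a, rfl⟩ := Polynomial.natDegree_eq_zero.mp hd
    refine ⟨0, fun n _ => ?_⟩
    simpa [Polynomial.leadingCoeff] using hl
  · set P : Polynomial ℚ := p.map (Int.castRingHom ℚ) with hP
    have hinj : Function.Injective (Int.castRingHom ℚ) := fun a b h => by simpa using h
    have hPne : P ≠ 0 := by
      simpa [hP, Polynomial.map_eq_zero_iff hinj] using hp
    have hdeg : 0 < P.degree := by
      rw [hP, Polynomial.degree_map_eq_of_injective hinj]
      exact Polynomial.natDegree_pos_iff_degree_pos.mp (Nat.pos_of_ne_zero hd)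
    have hlead : 0 ≤ P.leadingCoeff := by
      rw [hP, Polynomial.leadingCoeff_map_of_injective hinj]
      simp only [eq_intCast]
      exact_mod_cast hl.le
    have htend : Tendsto (fun x : ℚ => P.eval x) atTop atTop :=
      P.tendsto_atTop_of_leadingCoeff_nonneg hdeg hlead
    have htend2 : Tendsto (fun n : ℕ => P.eval (n : ℚ)) atTop atTop :=
      htend.comp tendsto_natCast_atTop_atTop
    have hev : ∀ᶠ n : ℕ in atTop, 1 ≤ P.eval (n : ℚ) := htend2.eventually_ge_atTop 1
    obtain ⟨M, hM⟩ := eventually_atTop.mp hev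
    refine ⟨M, fun n hn => ?_⟩
    have := hM n hn
    have hcast : P.eval (n : ℚ) = ((p.eval (n : ℤ) : ℤ) : ℚ) := by
      have h := Polynomial.eval_intCast_map (Int.castRingHom ℚ) p (n : ℤ)
      simp only [eq_intCast, Int.cast_natCast] at h
      simp [hP, h]
    rw [hcast] at this
    exact_mod_cast lt_of_lt_of_le zero_lt_one this

private lemma prime_dvd_prod {p : ℕ} (_hp : p.Prime) {n : ℕ} {k : ℕ} (S : Finset ℕ)
    (hk : k ∈ S) (hnk : n + k = p) (e : ℕ → ℕ) (he : 0 < e k) :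
    p ∣ ∏ i ∈ S, (n + i) ^ e i := by
  refine dvd_trans ?_ (Finset.dvd_prod_of_mem _ hk)
  rw [hnk]
  exact dvd_pow_self p he.ne'

private lemma prime_not_dvd_prod {p : ℕ} (hp : p.Prime) {n : ℕ} {k d : ℕ} (S : Finset ℕ)
    (hS : S ⊆ Finset.range (d + 1)) (hk : k ∉ S) (hnk : n + k = p)
    (hn : 0 < n) (hpd : d < p) (e : ℕ → ℕ) :
    ¬ p ∣ ∏ i ∈ S, (n + i) ^ e i := by
  intro hdvd
  obtain ⟨i, hi, hpi⟩ := hp.prime.exists_mem_finset_dvd hdvd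
  have hpi' : p ∣ n + i := hp.prime.dvd_of_dvd_pow hpi
  have hid : i ≤ d := Nat.lt_succ_iff.mp (Finset.mem_range.mp (hS hi))
  have hik : i ≠ k := fun h => hk (h ▸ hi)
  -- 0 < n + i < 2p and n + i ≠ p
  have h1 : n + i < 2 * p := by omega
  have h2 : n + i ≠ p := by omega
  obtain ⟨c, hc⟩ := hpi'
  have hppos : 0 < p := hp.pos
  have hclt : c < 2 := by
    by_contra hcge
    push_neg at hcge
    have : p * 2 ≤ p * c := Nat.mul_le_mul_left _ hcge
    omega
  interval_cases c <;> omega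

theorem products_unequal_for_arbitrarily_large_n
    (d : ℕ) (I J : Finset ℕ)
    (hI : I ⊆ Finset.range (d + 1)) (hJ : J ⊆ Finset.range (d + 1))
    (hdisj : Disjoint I J) (hne : (I ∪ J).Nonempty)
    (q : ℕ → Polynomial ℤ)
    (hq0 : ∀ i ∈ I ∪ J, q i ≠ 0)
    (hqlead : ∀ i ∈ I ∪ J, 0 < (q i).leadingCoeff) :
    ∀ N : ℕ, ∃ n : ℕ, N ≤ n ∧
      (∀ i ∈ I ∪ J, 0 < (q i).eval (n : ℤ)) ∧
      (∏ i ∈ I, (n + i) ^ ((q i).eval (n : ℤ)).toNat) ≠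
        (∏ j ∈ J, (n + j) ^ ((q j).eval (n : ℤ)).toNat) := by
  intro N
  -- bound for positivity of all the exponents
  have hbnd : ∃ M : ℕ, ∀ n : ℕ, M ≤ n → ∀ i ∈ I ∪ J, 0 < (q i).eval (n : ℤ) := by
    have : ∀ i ∈ I ∪ J, ∃ M : ℕ, ∀ n : ℕ, M ≤ n → 0 < (q i).eval (n : ℤ) :=
      fun i hi => eval_eventually_pos (q i) (hq0 i hi) (hqlead i hi)
    choose f hf using this
    classical
    refine ⟨(I ∪ J).sup (fun i => if h : i ∈ I ∪ J then f i h else 0), fun n hn i hi => ?_⟩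
    refine hf i hi n (le_trans ?_ hn)
    have := Finset.le_sup (f := fun i => if h : i ∈ I ∪ J then f i h else 0) hi
    simpa [hi] using this
  obtain ⟨M, hM⟩ := hbnd
  obtain ⟨k, hk⟩ := hne
  obtain ⟨p, hple, hp⟩ := Nat.exists_infinite_primes (N + M + d + k + 2)
  refine ⟨p - k, by omega, fun i hi => hM _ (by omega) i hi, ?_⟩
  set n := p - k with hn
  have hnk : n + k = p := by omega
  have hn0 : 0 < n := by omega
  have hpd : d < p := by omega
  have hek : 0 < ((q k).eval (n : ℤ)).toNat := by
    have := hM n (by omega) k hk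
    omega
  rcases Finset.mem_union.mp hk with hkI | hkJ
  · intro heq
    have h1 : p ∣ ∏ i ∈ I, (n + i) ^ ((q i).eval (n : ℤ)).toNat :=
      prime_dvd_prod hp I hkI hnk _ hek
    have hkJ' : k ∉ J := Finset.disjoint_left.mp hdisj hkI
    have h2 : ¬ p ∣ ∏ j ∈ J, (n + j) ^ ((q j).eval (n : ℤ)).toNat :=
      prime_not_dvd_prod hp J hJ hkJ' hnk hn0 hpd _
    exact h2 (heq ▸ h1)
  · intro heq
    have h1 : p ∣ ∏ j ∈ J, (n + j) ^ ((q j).eval (n : ℤ)).toNat :=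
      prime_dvd_prod hp J hkJ hnk _ hek
    have hkI' : k ∉ I := Finset.disjoint_right.mp hdisj hkJ
    have h2 : ¬ p ∣ ∏ i ∈ I, (n + i) ^ ((q i).eval (n : ℤ)).toNat :=
      prime_not_dvd_prod hp I hI hkI' hnk hn0 hpd _
    exact h2 (heq ▸ h1)
end
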